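/- arXiv:2511.15149 — 4 statements merged into one kernel-verified Lean document; each statement's English description precedes it below -/
import Mathlib

section
/- Let n ≥ 1 be a natural number, let z be a complex number with Re(z) > 0, and let u, v, w be complex numbers with u^n ∈ 𝔻, w^n ∈ 𝔻, and v ∈ 𝔻'. Then F(nz; u^n, v, w^n) = ∑_{α^n=1} ∑_{β^n=1} F(z; uα, v, wβ), where both sums run over all n-th roots of unity. -/
open Complex MeasureTheory Polynomial

/-- `t^z := exp(z · log t)` with `log t` the real logarithm. -/
noncomputable def tpow (z : ℂ) (t : ℝ) : ℂ := Complex.exp (z * Real.log t)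

/-- `F(z;u,v,w) = ∫₀¹ log(1 − u t^z) log(1 − w t^z)/(v⁻¹ − t) dt`. -/
noncomputable def F3 (z u v w : ℂ) : ℂ :=
  ∫ t in (0:ℝ)..1,
    Complex.log (1 - u * tpow z t) * Complex.log (1 - w * tpow z t) / (v⁻¹ - (t : ℂ))

lemma abs_eq_one_of_mem {n : ℕ} (hn : 1 ≤ n) {α : ℂ} (hα : α ∈ nthRootsFinset n (1 : ℂ)) :
    ‖α‖ = 1 := by
  have h1 : α ^ n = 1 := (Polynomial.mem_nthRootsFinset (by omega) 1).1 hα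
  have h2 : (‖α‖) ^ n = 1 := by rw [← norm_pow, h1, norm_one]
  have h3 : ‖α‖ ≤ 1 := (pow_le_one_iff_of_nonneg (norm_nonneg α) (by omega)).1 h2.le
  have h4 : 1 ≤ ‖α‖ := (one_le_pow_iff_of_nonneg (norm_nonneg α) (by omega)).1 h2.ge
  linarith

lemma sum_pow_nthRoots (n : ℕ) (hn : 1 ≤ n) (k : ℕ) :
    ∑ α ∈ nthRootsFinset n (1 : ℂ), α ^ k = if n ∣ k then (n : ℂ) else 0 := by
  obtain ⟨ζ, hζ⟩ : ∃ ζ : ℂ, IsPrimitiveRoot ζ n := ⟨_, Complex.isPrimitiveRoot_exp n (by omega)⟩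
  have hinj : Set.InjOn (fun j => ζ ^ j) (Finset.range n) := by
    intro i hi j hj h
    exact hζ.pow_inj (Finset.mem_range.1 hi) (Finset.mem_range.1 hj) h
  have himg : nthRootsFinset n (1 : ℂ) = (Finset.range n).image (fun j => ζ ^ j) := by
    refine (Finset.eq_of_subset_of_card_le ?_ ?_).symm
    · intro x hx
      simp only [Finset.mem_image, Finset.mem_range] at hx
      obtain ⟨j, hj, rfl⟩ := hx
      refine (Polynomial.mem_nthRootsFinset (by omega) 1).2 ?_
      rw [← pow_mul, mul_comm, pow_mul, hζ.pow_eq_one, one_pow]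
    · rw [hζ.card_nthRootsFinset, Finset.card_image_of_injOn hinj, Finset.card_range]
  rw [himg, Finset.sum_image hinj]
  have hpow : ∀ j, (ζ ^ j) ^ k = (ζ ^ k) ^ j := fun j => by
    rw [← pow_mul, mul_comm, pow_mul]
  simp only [hpow]
  by_cases h : n ∣ k
  · have h1 : ζ ^ k = 1 := (hζ.pow_eq_one_iff_dvd k).2 h
    simp [h1, h]
  · have h1 : ζ ^ k ≠ 1 := fun hc => h ((hζ.pow_eq_one_iff_dvd k).1 hc)
    rw [geom_sum_eq h1, if_neg h]
    have h2 : (ζ ^ k) ^ n = 1 := by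
      rw [← pow_mul, mul_comm, pow_mul, hζ.pow_eq_one, one_pow]
    rw [h2, sub_self, zero_div]

lemma log_prod_eq (n : ℕ) (hn : 1 ≤ n) {u s : ℂ} (hu : ‖u‖ ≤ 1)
    (hs : ‖s‖ < 1) :
    ∑ α ∈ nthRootsFinset n (1 : ℂ), Complex.log (1 - u * α * s) = Complex.log (1 - (u * s) ^ n) := by
  have hus : ‖u * s‖ < 1 := by
    rw [norm_mul]
    calc ‖u‖ * ‖s‖ ≤ 1 * ‖s‖ :=
          mul_le_mul_of_nonneg_right hu (norm_nonneg s)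
      _ = ‖s‖ := one_mul _
      _ < 1 := hs
  have h1 : ∀ α ∈ nthRootsFinset n (1 : ℂ),
      HasSum (fun k : ℕ => (u * α * s) ^ k / k) (-Complex.log (1 - u * α * s)) := by
    intro α hα
    apply Complex.hasSum_taylorSeries_neg_log
    rw [norm_mul, norm_mul, abs_eq_one_of_mem hn hα, mul_one]
    rw [norm_mul] at hus
    exact hus
  have h2 := hasSum_sum h1
  set f : ℕ → ℂ := fun k => (u * s) ^ k * (if n ∣ k then (n : ℂ) else 0) / k with hf
  have hfk : (fun k : ℕ => ∑ α ∈ nthRootsFinset n (1 : ℂ), (u * α * s) ^ k / k) = f := by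
    funext k
    have : ∀ α : ℂ, (u * α * s) ^ k = (u * s) ^ k * α ^ k := fun α => by ring
    simp only [this, hf]
    rw [← Finset.sum_div, ← Finset.mul_sum, sum_pow_nthRoots n hn k]
  rw [hfk] at h2
  have hg : Function.Injective (fun m : ℕ => n * m) := fun a b h => by
    simpa using Nat.eq_of_mul_eq_mul_left (by omega) h
  have hvan : ∀ k ∉ Set.range (fun m : ℕ => n * m), f k = 0 := by
    intro k hk
    have : ¬ n ∣ k := by
      intro ⟨m, hm⟩; exact hk ⟨m, hm.symm⟩
    simp [hf, this]
  have h3 : HasSum (f ∘ fun m : ℕ => n * m)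
      (∑ α ∈ nthRootsFinset n (1 : ℂ), -Complex.log (1 - u * α * s)) :=
    (Function.Injective.hasSum_iff hg hvan).2 h2
  have hcomp : (f ∘ fun m : ℕ => n * m) = fun m : ℕ => ((u * s) ^ n) ^ m / m := by
    funext m
    simp only [Function.comp, hf, if_pos (Dvd.intro m rfl), ← pow_mul]
    rcases Nat.eq_zero_or_pos m with rfl | hm
    · simp
    · have hn0 : (n : ℂ) ≠ 0 := Nat.cast_ne_zero.2 (by omega)
      have hm0 : (m : ℂ) ≠ 0 := Nat.cast_ne_zero.2 (by omega)
      push_cast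
      field_simp
  rw [hcomp] at h3
  have h4 : HasSum (fun m : ℕ => ((u * s) ^ n) ^ m / m) (-Complex.log (1 - (u * s) ^ n)) := by
    apply Complex.hasSum_taylorSeries_neg_log
    rw [norm_pow]
    exact pow_lt_one₀ (norm_nonneg _) hus (by omega)
  have h5 := h3.unique h4
  rw [Finset.sum_neg_distrib] at h5
  exact neg_injective h5


lemma abs_tpow {z : ℂ} {t : ℝ} (ht : 0 < t) : ‖tpow z t‖ = t ^ z.re := by
  rw [tpow, Complex.norm_exp, Real.rpow_def_of_pos ht]
  congr 1
  simp [Complex.mul_re, mul_comm]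

lemma norm_log_le_bound {c : ℂ} (hc : ‖c‖ ≤ 1) {z : ℂ} (hz : 0 < z.re) {t : ℝ}
    (ht : t ∈ Set.Ioo (0:ℝ) 1) :
    ‖Complex.log (1 - c * tpow z t)‖ ≤ Real.pi + Real.log 2 - Real.log (1 - t ^ z.re) := by
  set w := 1 - c * tpow z t with hw
  have hta : t ^ z.re < 1 := Real.rpow_lt_one ht.1.le ht.2 hz
  have hta0 : 0 < t ^ z.re := Real.rpow_pos_of_pos ht.1 _
  have h1 : ‖c * tpow z t‖ ≤ t ^ z.re := by
    rw [norm_mul, abs_tpow ht.1]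
    exact mul_le_of_le_one_left hta0.le hc
  have hlow : 1 - t ^ z.re ≤ ‖w‖ := by
    have h2 : ‖(1:ℂ)‖ - ‖c * tpow z t‖ ≤ ‖(1:ℂ) - c * tpow z t‖ := norm_sub_norm_le _ _
    simp only [norm_one] at h2
    linarith
  have hup : ‖w‖ ≤ 2 := by
    have h2 : ‖(1:ℂ) - c * tpow z t‖ ≤ ‖(1:ℂ)‖ + ‖c * tpow z t‖ := norm_sub_le _ _
    simp only [norm_one] at h2
    linarith
  have hw0 : 0 < ‖w‖ := by linarith
  have hmain : ‖Complex.log w‖ ≤ |Real.log (‖w‖)| + |Complex.arg w| := by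
    have h := Complex.norm_le_abs_re_add_abs_im (Complex.log w)
    rw [Complex.log_re, Complex.log_im] at h
    exact h
  have harg : |Complex.arg w| ≤ Real.pi := Complex.abs_arg_le_pi w
  have hlog2 : (0:ℝ) ≤ Real.log 2 := Real.log_nonneg (by norm_num)
  have hlogta : Real.log (1 - t ^ z.re) ≤ 0 := Real.log_nonpos (by linarith) (by linarith)
  have hub : Real.log (‖w‖) ≤ Real.log 2 := Real.log_le_log hw0 hup
  have hlb : Real.log (1 - t ^ z.re) ≤ Real.log (‖w‖) :=
    Real.log_le_log (by linarith) hlow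
  have habs : |Real.log (‖w‖)| ≤ Real.log 2 - Real.log (1 - t ^ z.re) := by
    rw [abs_le]; constructor <;> linarith
  linarith

lemma one_sub_rpow_lb {a : ℝ} (ha : 0 < a) :
    ∃ m : ℝ, 0 < m ∧ ∀ t ∈ Set.Ioo (0:ℝ) 1, m * (1 - t) ≤ 1 - t ^ a := by
  have hhalf : (0:ℝ) < 2⁻¹ := by norm_num
  have hha : (2⁻¹:ℝ) ^ a < 1 := Real.rpow_lt_one (by norm_num) (by norm_num) ha
  have hha0 : (0:ℝ) < (2⁻¹:ℝ) ^ a := Real.rpow_pos_of_pos hhalf a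
  refine ⟨min (1 - (2⁻¹:ℝ) ^ a) (a * (2⁻¹:ℝ) ^ a), lt_min (by linarith) (by positivity), ?_⟩
  intro t ht
  obtain ⟨ht0, ht1⟩ := ht
  set m := min (1 - (2⁻¹:ℝ) ^ a) (a * (2⁻¹:ℝ) ^ a) with hm
  have hm0 : 0 < m := lt_min (by linarith) (by positivity)
  have h1t : 0 < 1 - t := by linarith
  rcases le_total t 2⁻¹ with hle | hle
  · have h2 : t ^ a ≤ (2⁻¹:ℝ) ^ a := Real.rpow_le_rpow ht0.le hle ha.le
    have h3 : m * (1 - t) ≤ m * 1 := mul_le_mul_of_nonneg_left (by linarith) hm0.le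
    have h4 : m ≤ 1 - (2⁻¹:ℝ) ^ a := min_le_left _ _
    linarith
  · have hx : Real.log t ≤ t - 1 := Real.log_le_sub_one_of_pos ht0
    have hta : t ^ a = Real.exp (Real.log t * a) := Real.rpow_def_of_pos ht0 a
    have hexp := Real.add_one_le_exp (-(Real.log t * a))
    have hE : 0 < Real.exp (Real.log t * a) := Real.exp_pos _
    have hkey : (-(Real.log t * a) + 1) * Real.exp (Real.log t * a) ≤ 1 := by
      have := mul_le_mul_of_nonneg_right hexp hE.le
      rwa [← Real.exp_add, neg_add_cancel, Real.exp_zero] at this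
    -- so 1 - t^a ≥ -(log t * a) * t^a = a*(-log t)*t^a
    have h5 : a * (-Real.log t) * (t ^ a) ≤ 1 - t ^ a := by
      rw [hta]; nlinarith [hE]
    have h6 : (2⁻¹:ℝ) ^ a ≤ t ^ a := Real.rpow_le_rpow hhalf.le hle ha.le
    have h7 : 1 - t ≤ -Real.log t := by linarith
    have h8 : m ≤ a * (2⁻¹:ℝ) ^ a := min_le_right _ _
    have h9 : (2⁻¹:ℝ) ^ a * (1 - t) ≤ t ^ a * (-Real.log t) :=
      mul_le_mul h6 h7 h1t.le (le_trans hha0.le h6)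
    have h10 : a * ((2⁻¹:ℝ) ^ a * (1 - t)) ≤ a * (t ^ a * (-Real.log t)) :=
      mul_le_mul_of_nonneg_left h9 ha.le
    have h11 : m * (1 - t) ≤ a * (2⁻¹:ℝ) ^ a * (1 - t) := mul_le_mul_of_nonneg_right h8 h1t.le
    nlinarith [h5]

lemma neg_log_le {y : ℝ} (h0 : 0 < y) : -Real.log y ≤ 4 * y ^ (-(4⁻¹:ℝ)) := by
  have h1 : Real.log (y ^ (-(4⁻¹:ℝ))) = -(4⁻¹:ℝ) * Real.log y := Real.log_rpow h0 _
  have h2 : 0 < y ^ (-(4⁻¹:ℝ)) := Real.rpow_pos_of_pos h0 _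
  have h3 : Real.log (y ^ (-(4⁻¹:ℝ))) ≤ y ^ (-(4⁻¹:ℝ)) := by
    have := Real.log_le_sub_one_of_pos h2; linarith
  nlinarith


lemma denom_lb {v : ℂ} (hv0 : v ≠ 0) (hv1 : ‖v‖ ≤ 1) (hv2 : v ≠ 1) :
    ∃ d : ℝ, 0 < d ∧ ∀ t ∈ Set.Icc (0:ℝ) 1, d ≤ ‖v⁻¹ - t‖ := by
  have hne : ∀ t ∈ Set.Icc (0:ℝ) 1, v⁻¹ - (t:ℂ) ≠ 0 := by
    intro t ht h
    have heq : v⁻¹ = (t:ℂ) := sub_eq_zero.1 h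
    have habs : ‖v⁻¹‖ = |t| := by rw [heq, Complex.norm_real, Real.norm_eq_abs]
    have h1 : (1:ℝ) ≤ ‖v⁻¹‖ := by
      rw [norm_inv]
      have hpos := norm_pos_iff.mpr hv0
      have hinv : 0 < (‖v‖)⁻¹ := inv_pos.mpr hpos
      nlinarith [mul_inv_cancel₀ (ne_of_gt hpos)]
    have h2 : |t| ≤ 1 := abs_le.2 ⟨by linarith [ht.1], ht.2⟩
    have ht1 : t = 1 := by
      rcases ht with ⟨hl, hr⟩
      rw [_root_.abs_of_nonneg hl] at habs
      linarith [h1.trans_eq habs]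
    rw [ht1] at heq
    apply hv2
    field_simp at heq
    simpa using heq.symm
  have hcont : ContinuousOn (fun t : ℝ => ‖v⁻¹ - t‖) (Set.Icc 0 1) :=
    (continuous_norm.comp (continuous_const.sub Complex.continuous_ofReal)).continuousOn
  obtain ⟨t0, ht0, hmin⟩ := isCompact_Icc.exists_isMinOn ⟨0, by norm_num⟩ hcont
  exact ⟨_, norm_pos_iff.mpr (hne t0 ht0), fun t ht => hmin ht⟩

lemma integrand_integrable {z c1 c2 v : ℂ} (hz : 0 < z.re) (hc1 : ‖c1‖ ≤ 1)
    (hc2 : ‖c2‖ ≤ 1) (hv0 : v ≠ 0) (hv1 : ‖v‖ ≤ 1) (hv2 : v ≠ 1) :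
    IntervalIntegrable (fun t : ℝ =>
      Complex.log (1 - c1 * tpow z t) * Complex.log (1 - c2 * tpow z t) / (v⁻¹ - (t:ℂ)))
      volume 0 1 := by
  obtain ⟨m, hm0, hmb⟩ := one_sub_rpow_lb hz
  obtain ⟨d, hd0, hdb⟩ := denom_lb hv0 hv1 hv2
  set P := Real.pi + Real.log 2 with hP
  have hP0 : 0 < P := by
    have hl2 : (0:ℝ) ≤ Real.log 2 := Real.log_nonneg (by norm_num)
    have hpi := Real.pi_pos
    rw [hP]; linarith
  set g : ℝ → ℝ := fun t => d⁻¹ * (P ^ 2 + 8 * P * m ^ (-(4⁻¹:ℝ)) * (1 - t) ^ (-(4⁻¹:ℝ))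
      + 16 * m ^ (-(2⁻¹:ℝ)) * (1 - t) ^ (-(2⁻¹:ℝ))) with hg
  -- measurability
  have hmtpow : Measurable (fun t : ℝ => tpow z t) := by
    unfold tpow
    exact Complex.continuous_exp.measurable.comp
      ((Complex.measurable_ofReal.comp Real.measurable_log).const_mul z)
  have hmeas : Measurable (fun t : ℝ =>
      Complex.log (1 - c1 * tpow z t) * Complex.log (1 - c2 * tpow z t) / (v⁻¹ - (t:ℂ))) := by
    apply Measurable.div
    · exact ((measurable_const.sub (hmtpow.const_mul c1)).clog.mul
        ((measurable_const.sub (hmtpow.const_mul c2)).clog))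
    · exact measurable_const.sub Complex.measurable_ofReal
  -- integrability of g
  have hg_int : IntervalIntegrable g volume 0 1 := by
    have h4 : IntervalIntegrable (fun t : ℝ => ((1:ℝ) - t) ^ (-(4⁻¹:ℝ))) volume 0 1 := by
      have := (intervalIntegral.intervalIntegrable_rpow' (a := 1) (b := 0)
        (r := -(4⁻¹:ℝ)) (by norm_num)).comp_sub_left 1
      simpa using this
    have h2 : IntervalIntegrable (fun t : ℝ => ((1:ℝ) - t) ^ (-(2⁻¹:ℝ))) volume 0 1 := by
      have := (intervalIntegral.intervalIntegrable_rpow' (a := 1) (b := 0)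
        (r := -(2⁻¹:ℝ)) (by norm_num)).comp_sub_left 1
      simpa using this
    have : IntervalIntegrable (fun t : ℝ => P ^ 2 + 8 * P * m ^ (-(4⁻¹:ℝ)) * (1 - t) ^ (-(4⁻¹:ℝ))
      + 16 * m ^ (-(2⁻¹:ℝ)) * (1 - t) ^ (-(2⁻¹:ℝ))) volume 0 1 :=
      (intervalIntegrable_const.add (h4.const_mul _)).add (h2.const_mul _)
    simpa [hg] using this.const_mul d⁻¹
  -- the bound
  have hbound : ∀ t ∈ Set.Ioo (0:ℝ) 1,
      ‖Complex.log (1 - c1 * tpow z t) * Complex.log (1 - c2 * tpow z t) / (v⁻¹ - (t:ℂ))‖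
        ≤ g t := by
    intro t ht
    obtain ⟨ht0, ht1⟩ := ht
    have h1t : 0 < 1 - t := by linarith
    have hmt : 0 < m * (1 - t) := by positivity
    have hta : t ^ z.re < 1 := Real.rpow_lt_one ht0.le ht1 hz
    have hta0 : 0 < t ^ z.re := Real.rpow_pos_of_pos ht0 _
    have hml : m * (1 - t) ≤ 1 - t ^ z.re := hmb t ⟨ht0, ht1⟩
    set b := -Real.log (1 - t ^ z.re) with hb
    have hb0 : 0 ≤ b := by
      rw [hb]
      have := Real.log_nonpos (x := 1 - t ^ z.re) (by linarith) (by linarith)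
      linarith
    have hbq : b ≤ 4 * (m * (1 - t)) ^ (-(4⁻¹:ℝ)) := by
      have hlog : Real.log (m * (1 - t)) ≤ Real.log (1 - t ^ z.re) :=
        Real.log_le_log hmt hml
      have := neg_log_le hmt
      rw [hb]; linarith
    have hqsplit : (m * (1 - t)) ^ (-(4⁻¹:ℝ)) = m ^ (-(4⁻¹:ℝ)) * (1 - t) ^ (-(4⁻¹:ℝ)) :=
      Real.mul_rpow hm0.le h1t.le
    have hqsq : (m * (1 - t)) ^ (-(4⁻¹:ℝ)) * (m * (1 - t)) ^ (-(4⁻¹:ℝ))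
        = m ^ (-(2⁻¹:ℝ)) * (1 - t) ^ (-(2⁻¹:ℝ)) := by
      rw [← Real.rpow_add hmt, Real.mul_rpow hm0.le h1t.le]
      norm_num
    have hl1 : ‖Complex.log (1 - c1 * tpow z t)‖ ≤ P + b :=
      norm_log_le_bound hc1 hz ⟨ht0, ht1⟩
    have hl2 : ‖Complex.log (1 - c2 * tpow z t)‖ ≤ P + b :=
      norm_log_le_bound hc2 hz ⟨ht0, ht1⟩
    have hden : d ≤ ‖v⁻¹ - (t:ℂ)‖ := hdb t ⟨ht0.le, ht1.le⟩
    have hnum : ‖Complex.log (1 - c1 * tpow z t) * Complex.log (1 - c2 * tpow z t)‖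
        ≤ (P + b) * (P + b) := by
      rw [norm_mul]
      exact mul_le_mul hl1 hl2 (norm_nonneg _) (by linarith)
    rw [norm_div]
    have hstep : ‖Complex.log (1 - c1 * tpow z t) * Complex.log (1 - c2 * tpow z t)‖
        / ‖v⁻¹ - (t:ℂ)‖ ≤ (P + b) * (P + b) / d := by
      apply div_le_div₀ (by positivity) hnum hd0
      exact hden
    refine hstep.trans ?_
    rw [hg, div_eq_inv_mul]
    apply mul_le_mul_of_nonneg_left ?_ (by positivity)
    have hq0 : 0 ≤ (m * (1 - t)) ^ (-(4⁻¹:ℝ)) := (Real.rpow_pos_of_pos hmt _).le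
    nlinarith [hbq, hb0, hP0, hqsplit, hqsq, sq_nonneg (b - 4 * (m * (1-t)) ^ (-(4⁻¹:ℝ)))]
  -- assemble
  rw [intervalIntegrable_iff_integrableOn_Ioc_of_le (by norm_num : (0:ℝ) ≤ 1),
    integrableOn_Ioc_iff_integrableOn_Ioo]
  have hg_Ioo : IntegrableOn g (Set.Ioo (0:ℝ) 1) volume := by
    have := hg_int
    rw [intervalIntegrable_iff_integrableOn_Ioc_of_le (by norm_num : (0:ℝ) ≤ 1),
      integrableOn_Ioc_iff_integrableOn_Ioo] at this
    exact this
  refine Integrable.mono' hg_Ioo hmeas.aestronglyMeasurable.restrict ?_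
  filter_upwards [MeasureTheory.ae_restrict_mem measurableSet_Ioo] with t ht
  exact hbound t ht


theorem statement4 (n : ℕ) (hn : 1 ≤ n) (z u v w : ℂ) (hz : 0 < z.re)
    (hun0 : u ^ n ≠ 0) (hun1 : ‖u ^ n‖ ≤ 1)
    (hwn0 : w ^ n ≠ 0) (hwn1 : ‖w ^ n‖ ≤ 1)
    (hv0 : v ≠ 0) (hv1 : ‖v‖ ≤ 1) (hv2 : v ≠ 1) :
    F3 ((n : ℂ) * z) (u ^ n) v (w ^ n) =
      ∑ α ∈ nthRootsFinset n (1 : ℂ), ∑ β ∈ nthRootsFinset n (1 : ℂ), F3 z (u * α) v (w * β) := by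
  have hn0 : n ≠ 0 := by omega
  have hu1 : ‖u‖ ≤ 1 := by
    rw [norm_pow] at hun1
    exact (pow_le_one_iff_of_nonneg (norm_nonneg u) hn0).1 hun1
  have hw1 : ‖w‖ ≤ 1 := by
    rw [norm_pow] at hwn1
    exact (pow_le_one_iff_of_nonneg (norm_nonneg w) hn0).1 hwn1
  set A := nthRootsFinset n (1 : ℂ) with hA
  set f : ℂ → ℂ → ℝ → ℂ := fun c1 c2 t =>
    Complex.log (1 - c1 * tpow z t) * Complex.log (1 - c2 * tpow z t) / (v⁻¹ - (t:ℂ)) with hfdef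
  have habs1 : ∀ α ∈ A, ‖u * α‖ ≤ 1 := by
    intro α hα
    rw [norm_mul, abs_eq_one_of_mem hn hα, mul_one]; exact hu1
  have habs2 : ∀ β ∈ A, ‖w * β‖ ≤ 1 := by
    intro β hβ
    rw [norm_mul, abs_eq_one_of_mem hn hβ, mul_one]; exact hw1
  have hint : ∀ α ∈ A, ∀ β ∈ A, IntervalIntegrable (f (u * α) (w * β)) volume 0 1 :=
    fun α hα β hβ =>
      integrand_integrable hz (habs1 α hα) (habs2 β hβ) hv0 hv1 hv2
  have hRHS : ∑ α ∈ A, ∑ β ∈ A, F3 z (u * α) v (w * β)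
      = ∫ t in (0:ℝ)..1, ∑ α ∈ A, ∑ β ∈ A, f (u * α) (w * β) t := by
    have hinner : ∀ α ∈ A, IntervalIntegrable (fun t => ∑ β ∈ A, f (u * α) (w * β) t)
        volume 0 1 := by
      intro α hα
      have h1 := IntervalIntegrable.sum A (fun β hβ => hint α hα β hβ)
      have h2 : (∑ i ∈ A, f (u * α) (w * i))
          = fun t => ∑ β ∈ A, f (u * α) (w * β) t := by
        ext t; simp
      rwa [h2] at h1
    rw [intervalIntegral.integral_finset_sum hinner]
    refine Finset.sum_congr rfl fun α hα => ?_
    rw [intervalIntegral.integral_finset_sum (fun β hβ => hint α hα β hβ)]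
    exact Finset.sum_congr rfl fun β hβ => rfl
  rw [hRHS]
  show (∫ t in (0:ℝ)..1, Complex.log (1 - u ^ n * tpow ((n:ℂ) * z) t)
      * Complex.log (1 - w ^ n * tpow ((n:ℂ) * z) t) / (v⁻¹ - (t:ℂ))) = _
  apply intervalIntegral.integral_congr_ae
  have hae : ∀ᵐ x : ℝ ∂volume, x ≠ 1 := by
    refine MeasureTheory.ae_iff.mpr ?_
    have : {x : ℝ | ¬ x ≠ 1} = {1} := by ext x; simp
    rw [this]
    exact measure_singleton 1
  filter_upwards [hae] with x hx hmem
  rw [Set.uIoc_of_le (by norm_num : (0:ℝ) ≤ 1)] at hmem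
  have hx0 : 0 < x := hmem.1
  have hx1 : x < 1 := lt_of_le_of_ne hmem.2 hx
  have hs : ‖tpow z x‖ < 1 := by
    rw [abs_tpow hx0]
    exact Real.rpow_lt_one hx0.le hx1 hz
  have htp : tpow ((n:ℂ) * z) x = (tpow z x) ^ n := by
    unfold tpow
    rw [mul_assoc, Complex.exp_nat_mul]
  rw [htp, ← mul_pow, ← mul_pow, ← log_prod_eq n hn hu1 hs, ← log_prod_eq n hn hw1 hs,
    Finset.sum_mul_sum, Finset.sum_div]
  simp only [Finset.sum_div, hfdef, mul_assoc, hA]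
end

section
/- Let n ≥ 1 be a natural number and let v be a complex number with v^n ∈ 𝔻' such that for every n-th root of unity α the number αv/(αv−1) lies in the open unit disc. Then F(1/n; 1, v^n, 1) = −2·∑_{α^n=1} Li₃(αv/(αv−1)), where F(1/n; 1, v^n, 1) = ∫₀¹ log²(1 − t^{1/n})/(v^{−n} − t) dt. -/
open Complex MeasureTheory Polynomial

open Set

set_option maxHeartbeats 1000000

/-- The polylogarithm `Li_s(z) = ∑_{n≥1} z^n / n^s`. -/
noncomputable def Li (s : ℕ) (z : ℂ) : ℂ := ∑' n : ℕ, z ^ (n + 1) / ((n : ℂ) + 1) ^ s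


lemma exp_neg_image : (fun t : ℝ => Real.exp (-t)) '' Set.Ioi 0 = Set.Ioo 0 1 := by
  ext y
  constructor
  · rintro ⟨t, ht, rfl⟩
    exact ⟨Real.exp_pos _, Real.exp_lt_one_iff.2 (neg_lt_zero.2 ht)⟩
  · rintro ⟨h0, h1⟩
    exact ⟨-Real.log y, by simpa using Real.log_neg h0 h1, by simp [Real.exp_log h0]⟩

lemma exp_neg_deriv : ∀ x ∈ Set.Ioi (0:ℝ), HasDerivWithinAt (fun t : ℝ => Real.exp (-t))
    (-Real.exp (-x)) (Set.Ioi 0) x := by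
  intro x _
  simpa [mul_comm, Function.comp_def] using ((Real.hasDerivAt_exp (-x)).comp x (hasDerivAt_neg x)).hasDerivWithinAt

lemma exp_neg_injOn : Set.InjOn (fun t : ℝ => Real.exp (-t)) (Set.Ioi 0) :=
  fun a _ b _ h => by
    have := Real.exp_injective h; linarith [neg_injective this]

lemma integrableOn_sq_exp_neg (k : ℕ) :
    IntegrableOn (fun t : ℝ => t ^ 2 * Real.exp (-((k+1 : ℝ) * t))) (Set.Ioi 0) := by
  have hbase : IntegrableOn (fun t : ℝ => Real.exp (-t) * t ^ ((3:ℝ) - 1)) (Set.Ioi 0) :=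
    Real.GammaIntegral_convergent (by norm_num)
  have hbase' : IntegrableOn (fun t : ℝ => t ^ 2 * Real.exp (-t)) (Set.Ioi 0) := by
    refine hbase.congr_fun (fun t ht => ?_) measurableSet_Ioi
    beta_reduce
    rw [show (3:ℝ) - 1 = ((2:ℕ):ℝ) by norm_num, Real.rpow_natCast]
    ring
  refine Integrable.mono' hbase' ?_ ?_
  · exact (((measurable_id.pow_const 2).mul
      ((measurable_id.const_mul _).neg.exp)).aestronglyMeasurable)
  · filter_upwards [ae_restrict_mem measurableSet_Ioi] with t ht
    rw [Real.norm_eq_abs, abs_mul, _root_.abs_of_nonneg (sq_nonneg t), _root_.abs_of_nonneg (Real.exp_pos _).le]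
    have : Real.exp (-((k+1:ℝ) * t)) ≤ Real.exp (-t) := by
      apply Real.exp_le_exp.2
      have h1 : (1:ℝ) ≤ (k+1:ℝ) := by simp
      nlinarith [le_of_lt (Set.mem_Ioi.1 ht)]
    nlinarith [sq_nonneg t, this]

lemma J_int (k : ℕ) :
    IntegrableOn (fun x : ℝ => x ^ k * (Real.log x) ^ 2) (Set.Ioo 0 1) := by
  rw [← exp_neg_image,
    integrableOn_image_iff_integrableOn_abs_deriv_smul measurableSet_Ioi exp_neg_deriv
      exp_neg_injOn]
  refine (integrableOn_sq_exp_neg k).congr_fun (fun t ht => ?_) measurableSet_Ioi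
  rw [abs_neg, _root_.abs_of_nonneg (Real.exp_pos _).le, Real.log_exp, smul_eq_mul,
    ← Real.exp_nat_mul]
  beta_reduce
  rw [show -((k+1:ℝ)*t) = -t + (k:ℝ)*(-t) by ring, Real.exp_add]
  ring

lemma J_val (k : ℕ) :
    ∫ x in Set.Ioo (0:ℝ) 1, x ^ k * (Real.log x) ^ 2 = 2 / (k+1:ℝ) ^ 3 := by
  rw [← exp_neg_image,
    integral_image_eq_integral_abs_deriv_smul measurableSet_Ioi exp_neg_deriv exp_neg_injOn]
  have : ∀ t ∈ Set.Ioi (0:ℝ),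
      |(-Real.exp (-t))| • ((Real.exp (-t)) ^ k * (Real.log (Real.exp (-t))) ^ 2)
        = t ^ ((3:ℝ)-1) * Real.exp (-((k+1:ℝ) * t)) := by
    intro t _
    rw [abs_neg, _root_.abs_of_nonneg (Real.exp_pos _).le, Real.log_exp, smul_eq_mul,
      ← Real.exp_nat_mul, show (3:ℝ) - 1 = ((2:ℕ):ℝ) by norm_num, Real.rpow_natCast]
    rw [show -((k+1:ℝ)*t) = -t + (k:ℝ)*(-t) by ring, Real.exp_add]
    ring
  rw [setIntegral_congr_fun measurableSet_Ioi this,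
    Real.integral_rpow_mul_exp_neg_mul_Ioi (by norm_num) (by positivity : (0:ℝ) < (k+1:ℝ))]
  rw [show (3:ℝ) = ((3:ℕ):ℝ) by norm_num, Real.rpow_natCast,
    show ((3:ℕ):ℝ) = 2 + 1 by norm_num, Real.Gamma_add_one (by norm_num),
    show (2:ℝ) = ((1:ℕ):ℝ) + 1 by norm_num, Real.Gamma_add_one (by norm_num)]
  norm_num [Real.Gamma_one]
  rw [inv_mul_eq_div]


lemma prod_roots (n : ℕ) (hn : 0 < n) (w : ℂ) :
    w ^ n - 1 = ∏ α ∈ nthRootsFinset n (1 : ℂ), (w - α) := by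
  have h := Complex.isPrimitiveRoot_exp n hn.ne'
  simpa using h.pow_sub_pow_eq_prod_sub_mul w 1 hn

lemma sum_inv_sub_root (n : ℕ) (hn : 0 < n) (w : ℂ) (hw : w ^ n ≠ 1) :
    ∑ α ∈ nthRootsFinset n (1 : ℂ), (w - α)⁻¹ = n * w ^ (n - 1) / (w ^ n - 1) := by
  classical
  have h := Complex.isPrimitiveRoot_exp n hn.ne'
  have hprod := prod_roots n hn w
  have hP0 : w ^ n - 1 ≠ 0 := sub_ne_zero.2 hw
  have hne : ∀ α ∈ nthRootsFinset n (1 : ℂ), w - α ≠ 0 := by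
    intro α hα h0
    exact hP0 (hprod.trans (Finset.prod_eq_zero hα h0))
  have hder : ∑ α ∈ nthRootsFinset n (1 : ℂ), ∏ β ∈ (nthRootsFinset n (1 : ℂ)).erase α, (w - β)
      = n * w ^ (n - 1) := by
    have h1 : HasDerivAt (fun x : ℂ => ∏ α ∈ nthRootsFinset n (1 : ℂ), (x - α))
        (∑ α ∈ nthRootsFinset n (1 : ℂ), (∏ β ∈ (nthRootsFinset n (1 : ℂ)).erase α, (w - β)) • (1:ℂ)) w :=
      HasDerivAt.fun_finsetProd (fun i _ => (hasDerivAt_id w).sub_const i)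
    have h2 : HasDerivAt (fun x : ℂ => ∏ α ∈ nthRootsFinset n (1 : ℂ), (x - α))
        ((n : ℂ) * w ^ (n - 1)) w := by
      have h3 : HasDerivAt (fun x : ℂ => x ^ n - 1) ((n : ℂ) * w ^ (n - 1)) w := by
        simpa using (hasDerivAt_pow n w).sub_const 1
      refine h3.congr_of_eventuallyEq (Filter.Eventually.of_forall (fun x => ?_))
      exact (prod_roots n hn x).symm
    have := h1.unique h2
    simpa using this
  calc ∑ α ∈ nthRootsFinset n (1 : ℂ), (w - α)⁻¹
      = ∑ α ∈ nthRootsFinset n (1 : ℂ), (∏ β ∈ (nthRootsFinset n (1 : ℂ)).erase α, (w - β)) / (w ^ n - 1)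
        := by
        refine Finset.sum_congr rfl (fun α hα => ?_)
        rw [eq_div_iff hP0]
        rw [hprod, ← Finset.mul_prod_erase _ _ hα, inv_mul_eq_div, mul_comm,
          mul_div_assoc, div_self (hne α hα), mul_one]
    _ = n * w ^ (n - 1) / (w ^ n - 1) := by rw [← Finset.sum_div, hder]

lemma core_meas (z : ℂ) : Measurable (fun u : ℝ => ((Real.log u : ℂ))^2 * (z / (z * u - 1))) := by
  apply Measurable.mul
  · exact (Complex.measurable_ofReal.comp Real.measurable_log).pow_const 2
  · exact Measurable.div measurable_const
      (((measurable_const.mul Complex.measurable_ofReal).sub measurable_const))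

lemma denom_lb_s7 {z : ℂ} (hz : ‖z‖ < 1) {u : ℝ} (h0 : 0 ≤ u) (h1 : u ≤ 1) :
    1 - ‖z‖ ≤ ‖z * (u:ℂ) - 1‖ := by
  have h2 : ‖z * (u:ℂ)‖ ≤ ‖z‖ := by
    rw [norm_mul, Complex.norm_real, Real.norm_of_nonneg h0]
    nlinarith [norm_nonneg z]
  calc 1 - ‖z‖ ≤ ‖(1:ℂ)‖ - ‖z * (u:ℂ)‖ := by rw [norm_one]; linarith
    _ ≤ ‖(1:ℂ) - z * u‖ := norm_sub_norm_le _ _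
    _ = ‖z * u - 1‖ := by rw [← norm_neg]; ring_nf

lemma core_int {z : ℂ} (hz : ‖z‖ < 1) :
    IntegrableOn (fun u : ℝ => ((Real.log u : ℂ))^2 * (z / (z * u - 1))) (Set.Ioo 0 1) := by
  have hg : IntegrableOn (fun u : ℝ => (Real.log u)^2 * (‖z‖ / (1 - ‖z‖))) (Set.Ioo 0 1) := by
    refine Integrable.mul_const ?_ _
    exact (J_int 0).congr_fun (fun u _ => by ring) measurableSet_Ioo
  refine Integrable.mono' hg (core_meas z).aestronglyMeasurable ?_
  filter_upwards [ae_restrict_mem measurableSet_Ioo] with u hu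
  rw [norm_mul, norm_pow, Complex.norm_real, Real.norm_eq_abs, _root_.sq_abs, norm_div]
  have hd : 1 - ‖z‖ ≤ ‖z * (u:ℂ) - 1‖ := denom_lb_s7 hz hu.1.le hu.2.le
  have hdpos : (0:ℝ) < 1 - ‖z‖ := by linarith
  have : ‖z‖ / ‖z * (u:ℂ) - 1‖ ≤ ‖z‖ / (1 - ‖z‖) :=
    div_le_div_of_nonneg_left (norm_nonneg z) hdpos hd
  exact mul_le_mul_of_nonneg_left this (sq_nonneg _)

lemma core_val {z : ℂ} (hz : ‖z‖ < 1) :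
    ∫ u in Set.Ioo (0:ℝ) 1, ((Real.log u : ℂ))^2 * (z / (z * u - 1)) = -2 * Li 3 z := by
  set f : ℕ → ℝ → ℂ := fun k u => -(z^(k+1)) * ((u:ℂ)^k * ((Real.log u : ℂ))^2) with hf
  have hint : ∀ k, IntegrableOn (f k) (Set.Ioo 0 1) := by
    intro k
    apply Integrable.const_mul
    exact MeasureTheory.IntegrableOn.congr_fun ((J_int k).ofReal (𝕜 := ℂ))
      (fun u _ => by norm_cast) measurableSet_Ioo
  have hval : ∀ k, ∫ u in Set.Ioo (0:ℝ) 1, f k u = -2 * (z^(k+1) / ((k:ℂ)+1)^3) := by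
    intro k
    rw [MeasureTheory.integral_const_mul]
    have : ∫ u in Set.Ioo (0:ℝ) 1, ((u:ℂ)^k * ((Real.log u : ℂ))^2)
        = ((2 / (k+1:ℝ)^3 : ℝ) : ℂ) := by
      calc ∫ u in Set.Ioo (0:ℝ) 1, ((u:ℂ)^k * ((Real.log u : ℂ))^2)
          = ∫ u in Set.Ioo (0:ℝ) 1, ((u^k * (Real.log u)^2 : ℝ) : ℂ) :=
            setIntegral_congr_fun measurableSet_Ioo (fun u _ => by norm_cast)
        _ = ((∫ u in Set.Ioo (0:ℝ) 1, u^k * (Real.log u)^2 : ℝ) : ℂ) := integral_ofReal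
        _ = ((2 / (k+1:ℝ)^3 : ℝ) : ℂ) := by rw [J_val k]
    rw [this]
    push_cast
    ring
  have hnorm : ∀ k, ∫ u in Set.Ioo (0:ℝ) 1, ‖f k u‖ = ‖z‖^(k+1) * (2 / (k+1:ℝ)^3) := by
    intro k
    have : ∀ u ∈ Set.Ioo (0:ℝ) 1, ‖f k u‖ = ‖z‖^(k+1) * (u^k * (Real.log u)^2) := by
      intro u hu
      rw [hf]
      simp only [norm_mul, norm_neg, norm_pow, Complex.norm_real, Real.norm_eq_abs, _root_.sq_abs,
        _root_.abs_of_pos hu.1]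
    rw [setIntegral_congr_fun measurableSet_Ioo this, MeasureTheory.integral_const_mul, J_val k]
  have hsum : Summable (fun k : ℕ => ∫ u in Set.Ioo (0:ℝ) 1, ‖f k u‖) := by
    refine Summable.of_nonneg_of_le (f := fun k => 2 * ‖z‖^(k+1))
      (fun k => integral_nonneg (fun u => norm_nonneg _)) (fun k => ?_) ?_
    · rw [hnorm k]
      have hk1 : (1:ℝ) ≤ (k:ℝ) + 1 := by linarith [Nat.cast_nonneg (α := ℝ) k]
      have h3 : (1:ℝ) ≤ ((k:ℝ)+1)^3 := one_le_pow₀ hk1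
      have h1 : (2 / (k+1:ℝ)^3) ≤ 2 := by
        rw [div_le_iff₀ (by positivity)]
        nlinarith
      calc ‖z‖^(k+1) * (2/(k+1:ℝ)^3) ≤ ‖z‖^(k+1) * 2 :=
            mul_le_mul_of_nonneg_left h1 (by positivity)
        _ = 2 * ‖z‖^(k+1) := by ring
    · have hs : Summable (fun k : ℕ => ‖z‖ ^ k) := summable_geometric_of_lt_one (norm_nonneg z) hz
      refine (hs.mul_left (2 * ‖z‖)).congr (fun k => ?_)
      rw [pow_succ]
      ring
  have hswap := MeasureTheory.integral_tsum_of_summable_integral_norm hint hsum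
  have hpt : ∀ u ∈ Set.Ioo (0:ℝ) 1,
      ∑' k, f k u = ((Real.log u : ℂ))^2 * (z / (z * u - 1)) := by
    intro u hu
    have hzu : ‖z * (u:ℂ)‖ < 1 := by
      rw [norm_mul, Complex.norm_real, Real.norm_of_nonneg hu.1.le]
      calc ‖z‖ * u ≤ ‖z‖ * 1 := mul_le_mul_of_nonneg_left hu.2.le (norm_nonneg z)
        _ = ‖z‖ := mul_one _
        _ < 1 := hz
    have hgeo := tsum_geometric_of_norm_lt_one hzu
    have : ∀ k : ℕ, f k u = (-z * ((Real.log u : ℂ))^2) * (z * u)^k := by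
      intro k; rw [hf]; simp only [mul_pow]; ring
    rw [tsum_congr this, tsum_mul_left, hgeo]
    have hne : (1:ℂ) - z * u ≠ 0 := by
      intro h
      rw [sub_eq_zero] at h
      rw [← h] at hzu
      simp at hzu
    have hrw : z / (z*(u:ℂ) - 1) = -z * (1 - z*(u:ℂ))⁻¹ := by
      rw [div_eq_mul_inv, show z*(u:ℂ) - 1 = -(1 - z*(u:ℂ)) by ring, inv_neg]
      ring
    rw [hrw]
    ring
  calc ∫ u in Set.Ioo (0:ℝ) 1, ((Real.log u : ℂ))^2 * (z / (z * u - 1))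
      = ∫ u in Set.Ioo (0:ℝ) 1, ∑' k, f k u :=
        (setIntegral_congr_fun measurableSet_Ioo (fun u hu => (hpt u hu).symm))
    _ = ∑' k, ∫ u in Set.Ioo (0:ℝ) 1, f k u := hswap.symm
    _ = ∑' k : ℕ, -2 * (z^(k+1) / ((k:ℂ)+1)^3) := tsum_congr hval
    _ = -2 * Li 3 z := by rw [tsum_mul_left]; rfl

lemma one_sub_image : (fun u : ℝ => 1 - u) '' Set.Ioo 0 1 = Set.Ioo 0 1 := by
  ext y
  constructor
  · rintro ⟨u, ⟨h0, h1⟩, rfl⟩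
    exact ⟨by simp only; linarith, by simp only; linarith⟩
  · rintro ⟨h0, h1⟩
    exact ⟨1 - y, ⟨by linarith, by linarith⟩, by ring⟩

lemma one_sub_deriv : ∀ u ∈ Set.Ioo (0:ℝ) 1,
    HasDerivWithinAt (fun u : ℝ => 1 - u) (-1) (Set.Ioo 0 1) u := by
  intro u _
  simpa using ((hasDerivAt_id u).const_sub 1).hasDerivWithinAt

lemma one_sub_injOn : Set.InjOn (fun u : ℝ => 1 - u) (Set.Ioo 0 1) := by
  intro a _ b _ h
  simp only at h
  linarith

lemma pow_image (n : ℕ) (hn : 0 < n) :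
    (fun s : ℝ => s ^ n) '' Set.Ioo 0 1 = Set.Ioo 0 1 := by
  ext y
  constructor
  · rintro ⟨s, ⟨h0, h1⟩, rfl⟩
    exact ⟨pow_pos h0 n, pow_lt_one₀ h0.le h1 hn.ne'⟩
  · rintro ⟨h0, h1⟩
    refine ⟨y ^ ((n:ℝ)⁻¹), ⟨Real.rpow_pos_of_pos h0 _, Real.rpow_lt_one h0.le h1 (by positivity)⟩, ?_⟩
    simp only
    rw [← Real.rpow_natCast (y ^ ((n:ℝ)⁻¹)) n, ← Real.rpow_mul h0.le,
      inv_mul_cancel₀ (by positivity : ((n:ℝ)) ≠ 0), Real.rpow_one]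

lemma pow_deriv (n : ℕ) : ∀ s ∈ Set.Ioo (0:ℝ) 1,
    HasDerivWithinAt (fun s : ℝ => s ^ n) ((n:ℝ) * s ^ (n-1)) (Set.Ioo 0 1) s :=
  fun s _ => (hasDerivAt_pow n s).hasDerivWithinAt

lemma pow_injOn (n : ℕ) (hn : 0 < n) : Set.InjOn (fun s : ℝ => s ^ n) (Set.Ioo 0 1) := by
  intro a ha b hb h
  simp only at h
  exact (pow_left_strictMonoOn₀ (M₀ := ℝ) hn.ne').injOn ha.1.le hb.1.le h

theorem statement7 (n : ℕ) (hn : 1 ≤ n) (v : ℂ)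
    (hvn0 : v ^ n ≠ 0) (hvn1 : ‖v ^ n‖ ≤ 1) (hvn2 : v ^ n ≠ 1)
    (hdisc : ∀ α ∈ nthRootsFinset n (1 : ℂ), ‖α * v / (α * v - 1)‖ < 1) :
    F3 ((n : ℂ))⁻¹ 1 (v ^ n) 1 =
      -2 * ∑ α ∈ nthRootsFinset n (1 : ℂ), Li 3 (α * v / (α * v - 1)) := by
  classical
  have hn0 : 0 < n := hn
  have hN : ((n:ℂ)) ≠ 0 := Nat.cast_ne_zero.2 hn0.ne'
  have hv0 : v ≠ 0 := fun h => hvn0 (by simp [h, zero_pow hn0.ne'])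
  have hvnorm : ‖v ^ n‖ ≤ 1 := hvn1
  have hroot : ∀ α ∈ nthRootsFinset n (1 : ℂ), α ^ n = 1 :=
    fun α hα => (Polynomial.mem_nthRootsFinset hn0 (1 : ℂ)).1 hα
  have hα0 : ∀ α ∈ nthRootsFinset n (1 : ℂ), α ≠ 0 := by
    intro α hα h
    have := hroot α hα
    rw [h, zero_pow hn0.ne'] at this
    exact zero_ne_one this
  have hvα : ∀ α ∈ nthRootsFinset n (1 : ℂ), v - α ≠ 0 := by
    intro α hα h
    rw [sub_eq_zero] at h
    exact hvn2 (h ▸ hroot α hα)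
  have hmeminv : ∀ α ∈ nthRootsFinset n (1 : ℂ), α⁻¹ ∈ nthRootsFinset n (1 : ℂ) := by
    intro α hα
    rw [Polynomial.mem_nthRootsFinset hn0, inv_pow, hroot α hα, inv_one]
  have hinvden : ∀ α ∈ nthRootsFinset n (1 : ℂ), α⁻¹ * v - 1 ≠ 0 := by
    intro α hα
    have : α⁻¹ * v - 1 = α⁻¹ * (v - α) := by
      field_simp [hα0 α hα]
    rw [this]
    exact mul_ne_zero (inv_ne_zero (hα0 α hα)) (hvα α hα)
  have harg : ∀ α ∈ nthRootsFinset n (1 : ℂ), α⁻¹ * v / (α⁻¹ * v - 1) = v / (v - α) := by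
    intro α hα
    rw [div_eq_div_iff (hinvden α hα) (hvα α hα)]
    field_simp [hα0 α hα]
  have hzlt : ∀ α ∈ nthRootsFinset n (1 : ℂ), ‖v / (v - α)‖ < 1 := by
    intro α hα
    have := hdisc α⁻¹ (hmeminv α hα)
    rwa [harg α hα] at this
  -- per-term data
  set H : ℂ → ℝ → ℂ :=
    fun α s => (Complex.log (1 - (s:ℂ)))^2 * (-v * (v*(s:ℂ) - α)⁻¹) with hH
  have key_pt : ∀ α ∈ nthRootsFinset n (1 : ℂ), ∀ u ∈ Set.Ioo (0:ℝ) 1,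
      |(-1:ℝ)| • H α (1-u) = ((Real.log u : ℂ))^2 * ((v/(v-α)) / ((v/(v-α)) * u - 1)) := by
    intro α hα u hu
    have hzu1 : (v/(v-α)) * (u:ℂ) - 1 ≠ 0 := by
      intro h
      have h2 : ‖(v/(v-α)) * (u:ℂ)‖ < 1 := by
        rw [norm_mul, Complex.norm_real, Real.norm_of_nonneg hu.1.le]
        calc ‖v/(v-α)‖ * u ≤ ‖v/(v-α)‖ * 1 :=
              mul_le_mul_of_nonneg_left hu.2.le (norm_nonneg _)
          _ = ‖v/(v-α)‖ := mul_one _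
          _ < 1 := hzlt α hα
      rw [sub_eq_zero] at h
      rw [h] at h2
      simp at h2
    have hzv : (v - α) * (v/(v-α)) = v := by
      field_simp [hvα α hα]
    have hden : v*((1:ℂ)-(u:ℂ)) - α = -((v-α) * ((v/(v-α))*(u:ℂ) - 1)) := by
      linear_combination ((u:ℂ)) * hzv
    have hd1 : v*((1:ℂ)-(u:ℂ)) - α ≠ 0 := by
      rw [hden]
      exact neg_ne_zero.2 (mul_ne_zero (hvα α hα) hzu1)
    rw [hH]
    simp only [abs_neg, abs_one, one_smul]
    have hcast : (1 : ℂ) - ((1-u : ℝ):ℂ) = (u:ℂ) := by push_cast; ring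
    have hcast2 : v * ((1-u : ℝ):ℂ) - α = v*((1:ℂ)-(u:ℂ)) - α := by push_cast; ring
    rw [hcast, hcast2, ← Complex.ofReal_log hu.1.le]
    congr 1
    rw [← div_eq_mul_inv, div_eq_div_iff hd1 hzu1]
    linear_combination ((((v/(v-α))*(u:ℂ) - 1) * v) - (u:ℂ)*v^2*(v-α)⁻¹) * mul_inv_cancel₀ (hvα α hα)
  have hHint : ∀ α ∈ nthRootsFinset n (1 : ℂ), IntegrableOn (H α) (Set.Ioo 0 1) := by
    intro α hα
    rw [← one_sub_image, integrableOn_image_iff_integrableOn_abs_deriv_smul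
      measurableSet_Ioo one_sub_deriv one_sub_injOn]
    exact MeasureTheory.IntegrableOn.congr_fun (core_int (hzlt α hα))
      (fun u hu => (key_pt α hα u hu).symm) measurableSet_Ioo
  have hHval : ∀ α ∈ nthRootsFinset n (1 : ℂ),
      ∫ s in Set.Ioo (0:ℝ) 1, H α s = -2 * Li 3 (v/(v-α)) := by
    intro α hα
    rw [← one_sub_image, integral_image_eq_integral_abs_deriv_smul
      measurableSet_Ioo one_sub_deriv one_sub_injOn,
      setIntegral_congr_fun measurableSet_Ioo (key_pt α hα), core_val (hzlt α hα)]
  -- main pointwise identity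
  have hmain_pt : ∀ s ∈ Set.Ioo (0:ℝ) 1,
      |(n:ℝ) * s^(n-1)| • (Complex.log (1 - 1 * tpow ((n:ℂ))⁻¹ (s^n)) *
          Complex.log (1 - 1 * tpow ((n:ℂ))⁻¹ (s^n)) / ((v^n)⁻¹ - ((s^n : ℝ):ℂ)))
        = ∑ α ∈ nthRootsFinset n (1 : ℂ), H α s := by
    intro s hs
    have hs0 : 0 < s := hs.1
    have hs1 : s < 1 := hs.2
    have htpow : tpow ((n:ℂ))⁻¹ (s^n) = (s:ℂ) := by
      rw [tpow, Real.log_pow]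
      have : ((n:ℂ))⁻¹ * ((n * Real.log s : ℝ):ℂ) = ((Real.log s : ℝ):ℂ) := by
        push_cast
        field_simp
      rw [this, ← Complex.ofReal_exp, Real.exp_log hs0]
    have habs : |(n:ℝ) * s^(n-1)| = (n:ℝ) * s^(n-1) := by
      apply _root_.abs_of_nonneg
      positivity
    have hsn1 : ‖v^n * ((s:ℂ))^n‖ < 1 := by
      rw [norm_mul, norm_pow, norm_pow, Complex.norm_real, Real.norm_of_nonneg hs0.le,
        ← norm_pow]
      calc ‖v^n‖ * s^n ≤ 1 * s^n := mul_le_mul_of_nonneg_right hvnorm (by positivity)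
        _ = s^n := one_mul _
        _ < 1 := pow_lt_one₀ hs0.le hs1 hn0.ne'
    have hD2 : v^n * ((s:ℂ))^n - 1 ≠ 0 := by
      intro h
      rw [sub_eq_zero] at h
      rw [h] at hsn1
      simp at hsn1
    have hD : (v^n)⁻¹ - ((s:ℂ))^n ≠ 0 := by
      intro h
      rw [sub_eq_zero] at h
      apply hD2
      rw [← h]
      field_simp
      ring
    have hw : (v * (s:ℂ))^n ≠ 1 := by
      rw [mul_pow]
      intro h
      exact hD2 (by rw [h]; ring)
    have hsum := sum_inv_sub_root n hn0 (v * (s:ℂ)) hw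
    have hvp : v^(n-1) * v = v^n := by
      rw [← pow_succ, Nat.sub_add_cancel hn]
    have hsp : ((s:ℂ))^(n-1) * (s:ℂ) = ((s:ℂ))^n := by
      rw [← pow_succ, Nat.sub_add_cancel hn]
    have hscalar : (((n:ℝ) * s^(n-1) : ℝ):ℂ) / ((v^n)⁻¹ - ((s:ℂ))^n)
        = -v * ((n:ℂ) * (v * (s:ℂ))^(n-1) / ((v * (s:ℂ))^n - 1)) := by
      rw [mul_pow, mul_pow]
      push_cast
      rw [← hvp, ← hsp]
      rw [← hvp, ← hsp] at hD hD2
      have hs0' : ((s:ℂ)) ≠ 0 := Complex.ofReal_ne_zero.2 hs0.ne'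
      have hD2' : (1:ℂ) - (s:ℂ)*(s:ℂ)^(n-1)*v*v^(n-1) ≠ 0 :=
        fun h => hD2 (by linear_combination -h)
      field_simp [hD, hD2, hD2', hv0, hs0', pow_ne_zero (n-1) hv0, pow_ne_zero (n-1) hs0']
      rw [← neg_sub, div_neg]
    rw [htpow]
    rw [habs]
    have hrhs : ∑ α ∈ nthRootsFinset n (1 : ℂ), H α s
        = (Complex.log (1 - (s:ℂ)))^2 * (-v * ((n:ℂ) * (v * (s:ℂ))^(n-1) / ((v * (s:ℂ))^n - 1))) := by
      rw [hH]
      rw [← Finset.mul_sum, ← Finset.mul_sum, hsum]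
    rw [hrhs, ← hscalar]
    have hcast3 : ((s^n : ℝ):ℂ) = ((s:ℂ))^n := by push_cast; ring
    rw [hcast3]
    rw [real_smul]
    push_cast
    ring
  -- assemble
  have h1 : F3 ((n : ℂ))⁻¹ 1 (v ^ n) 1
      = ∫ t in Set.Ioo (0:ℝ) 1, Complex.log (1 - 1 * tpow ((n:ℂ))⁻¹ t) *
          Complex.log (1 - 1 * tpow ((n:ℂ))⁻¹ t) / ((v^n)⁻¹ - (t:ℂ)) := by
    rw [F3, intervalIntegral.integral_of_le zero_le_one,
      MeasureTheory.integral_Ioc_eq_integral_Ioo]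
  rw [h1, ← pow_image n hn0, integral_image_eq_integral_abs_deriv_smul
      measurableSet_Ioo (pow_deriv n) (pow_injOn n hn0)]
  rw [setIntegral_congr_fun measurableSet_Ioo (fun s hs => hmain_pt s hs)]
  rw [MeasureTheory.integral_finset_sum _ (fun α hα => hHint α hα)]
  rw [Finset.sum_congr rfl (fun α hα => hHval α hα), ← Finset.mul_sum]
  congr 1
  refine Finset.sum_bij' (fun α _ => α⁻¹) (fun α _ => α⁻¹) ?_ ?_ ?_ ?_ ?_
  · exact fun α hα => hmeminv α hα
  · exact fun α hα => hmeminv α hα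
  · intro α hα; simp
  · intro α hα; simp
  · intro α hα
    rw [harg α hα]
end

section
/- Let p, q ≥ 1 be natural numbers and let u, v, w be complex numbers with u, w ∈ 𝔻 and v ∈ 𝔻'. Fix complex numbers ζ_u, ζ_w with ζ_u^p = u and ζ_w^p = w, and ζ_v with ζ_v^q = v, such that αζ_v ∈ 𝔻' for every q-th root of unity α. Then F(p/q; u, v, w) = ∑_{α^q=1} ∑_{β^p=1} ∑_{γ^p=1} F(1; ζ_u·β, ζ_v·α, ζ_w·γ), where the sums run over all q-th (respectively p-th) roots of unity. -/
open Complex MeasureTheory Polynomial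

/- ### Auxiliary lemmas -/

lemma abs_nthRoot {n : ℕ} (hn : 0 < n) {β : ℂ} (hβ : β ∈ nthRootsFinset n (1 : ℂ)) :
    ‖β‖ = 1 :=
  Complex.norm_eq_one_of_pow_eq_one ((Polynomial.mem_nthRootsFinset hn (1 : ℂ)).1 hβ) hn.ne'


lemma sum_nthRoots_pow {n : ℕ} (hn : 0 < n) (k : ℕ) :
    ∑ β ∈ nthRootsFinset n (1 : ℂ), β ^ k = if n ∣ k then (n : ℂ) else 0 := by
  obtain ⟨ζ, hζ⟩ : ∃ ζ : ℂ, IsPrimitiveRoot ζ n := ⟨_, Complex.isPrimitiveRoot_exp n hn.ne'⟩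
  by_cases hdvd : n ∣ k
  · rw [if_pos hdvd, Finset.sum_congr rfl (fun β hβ => ?_), Finset.sum_const,
      hζ.card_nthRootsFinset, nsmul_eq_mul, mul_one]
    obtain ⟨m, rfl⟩ := hdvd
    rw [pow_mul, (Polynomial.mem_nthRootsFinset hn (1 : ℂ)).1 hβ, one_pow]
  · rw [if_neg hdvd]
    have hζk : ζ ^ k ≠ 1 := fun h => hdvd ((hζ.pow_eq_one_iff_dvd k).1 h)
    have hζ0 : ζ ≠ 0 := hζ.ne_zero hn.ne'
    have hζmem : ζ ∈ nthRootsFinset n (1 : ℂ) := (Polynomial.mem_nthRootsFinset hn (1 : ℂ)).2 hζ.pow_eq_one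
    have hζinv : ζ⁻¹ ∈ nthRootsFinset n (1 : ℂ) :=
      (Polynomial.mem_nthRootsFinset hn (1 : ℂ)).2 (by rw [inv_pow, hζ.pow_eq_one, inv_one])
    have key : ζ ^ k * ∑ β ∈ nthRootsFinset n (1 : ℂ), β ^ k = ∑ β ∈ nthRootsFinset n (1 : ℂ), β ^ k := by
      rw [Finset.mul_sum]
      simp_rw [← mul_pow]
      exact Finset.sum_nbij' (fun β => ζ * β) (fun β => ζ⁻¹ * β)
        (fun β hβ => by simpa using Polynomial.mul_mem_nthRootsFinset hζmem hβ)
        (fun β hβ => by simpa using Polynomial.mul_mem_nthRootsFinset hζinv hβ)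
        (fun β _ => by field_simp)
        (fun β _ => by field_simp)
        (fun β _ => rfl)
    have h0 : (ζ ^ k - 1) * ∑ β ∈ nthRootsFinset n (1 : ℂ), β ^ k = 0 := by
      rw [sub_mul, one_mul, key, sub_self]
    rcases mul_eq_zero.1 h0 with h | h
    · exact absurd (sub_eq_zero.1 h) hζk
    · exact h


lemma norm_root_mul_lt {n : ℕ} (hn : 0 < n) {ζ : ℂ} (hζ : ‖ζ‖ ≤ 1) {β : ℂ}
    (hβ : β ∈ nthRootsFinset n (1 : ℂ)) {s : ℝ} (hs0 : 0 < s) (hs1 : s < 1) :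
    ‖ζ * β * (s : ℂ)‖ < 1 := by
  have h1 : ‖β‖ = 1 := abs_nthRoot hn hβ
  have : ‖ζ * β * (s : ℂ)‖ = ‖ζ‖ * ‖β‖ * |s| := by
    simp [norm_mul, Complex.norm_real, Real.norm_eq_abs]
  rw [this, h1, mul_one, abs_of_pos hs0]
  calc ‖ζ‖ * s ≤ 1 * s := by nlinarith [norm_nonneg ζ]
    _ < 1 := by linarith


lemma norm_pow_lt {ζ : ℂ} (hζ : ‖ζ‖ ≤ 1) {s : ℝ} (hs0 : 0 < s) (hs1 : s < 1)
    {n : ℕ} (hn : 0 < n) : ‖(ζ * (s : ℂ)) ^ n‖ < 1 := by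
  rw [norm_pow]
  have hb : ‖ζ * (s:ℂ)‖ < 1 := by
    have : ‖ζ * (s : ℂ)‖ = ‖ζ‖ * |s| := by
      simp [norm_mul, Complex.norm_real, Real.norm_eq_abs]
    rw [this, abs_of_pos hs0]
    nlinarith [norm_nonneg ζ]
  exact pow_lt_one₀ (norm_nonneg _) hb hn.ne'


lemma log_sum_eq {p : ℕ} (hp : 0 < p) {ζ : ℂ} (hζ : ‖ζ‖ ≤ 1) {s : ℝ}
    (hs0 : 0 < s) (hs1 : s < 1) :
    ∑ β ∈ nthRootsFinset p (1 : ℂ), Complex.log (1 - ζ * β * (s : ℂ)) =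
      Complex.log (1 - ζ ^ p * (s : ℂ) ^ p) := by
  have hβsum : ∀ β ∈ nthRootsFinset p (1 : ℂ),
      HasSum (fun m : ℕ => (ζ * β * (s:ℂ)) ^ m / m) (-Complex.log (1 - ζ * β * s)) := fun β hβ =>
    Complex.hasSum_taylorSeries_neg_log (norm_root_mul_lt hp hζ hβ hs0 hs1)
  have h1 : HasSum (fun m : ℕ => ∑ β ∈ nthRootsFinset p (1 : ℂ), (ζ * β * (s:ℂ)) ^ m / m)
      (∑ β ∈ nthRootsFinset p (1 : ℂ), -Complex.log (1 - ζ * β * s)) := hasSum_sum hβsum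
  have h2 : (fun m : ℕ => ∑ β ∈ nthRootsFinset p (1 : ℂ), (ζ * β * (s:ℂ)) ^ m / m)
      = fun m : ℕ => if p ∣ m then (p : ℂ) * ((ζ * s) ^ m / m) else 0 := by
    funext m
    have heach : ∀ β ∈ nthRootsFinset p (1 : ℂ), (ζ * β * (s:ℂ)) ^ m / m = (ζ * s) ^ m / m * β ^ m :=
      fun β _ => by ring
    rw [Finset.sum_congr rfl heach, ← Finset.mul_sum, sum_nthRoots_pow hp m]
    split_ifs with h
    · ring
    · rw [mul_zero]
  rw [h2] at h1
  -- the reindexed geometric-log series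
  have h3 : HasSum (fun m : ℕ => ((ζ * (s:ℂ)) ^ p) ^ m / m)
      (-Complex.log (1 - (ζ * s) ^ p)) :=
    Complex.hasSum_taylorSeries_neg_log (norm_pow_lt hζ hs0 hs1 hp)
  have hinj : Function.Injective (fun m : ℕ => p * m) := fun a b h => by
    simpa [Nat.mul_right_inj hp.ne'] using h
  have hzero : ∀ m ∉ Set.range (fun m : ℕ => p * m),
      (if p ∣ m then (p : ℂ) * ((ζ * s) ^ m / m) else 0) = 0 := by
    intro m hm
    rw [if_neg]
    intro ⟨c, hc⟩
    exact hm ⟨c, hc.symm⟩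
  have h4 : HasSum ((fun m : ℕ => if p ∣ m then (p : ℂ) * ((ζ * s) ^ m / m) else 0) ∘ (fun m : ℕ => p * m))
      (-Complex.log (1 - (ζ * s) ^ p)) := by
    refine h3.congr_fun fun m => ?_
    show (if p ∣ (p * m) then (p : ℂ) * ((ζ * s) ^ (p * m) / ((p * m : ℕ) : ℂ)) else 0) = _
    rw [if_pos (Dvd.intro m rfl)]
    rcases Nat.eq_zero_or_pos m with rfl | hm
    · simp
    · rw [pow_mul]
      have hpm : ((p * m : ℕ) : ℂ) ≠ 0 := by
        exact_mod_cast Nat.cast_ne_zero.2 (Nat.mul_ne_zero hp.ne' hm.ne')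
      have hm0 : (m : ℂ) ≠ 0 := Nat.cast_ne_zero.2 hm.ne'
      have hp0 : (p : ℂ) ≠ 0 := Nat.cast_ne_zero.2 hp.ne'
      push_cast
      field_simp
  have h5 : HasSum (fun m : ℕ => if p ∣ m then (p : ℂ) * ((ζ * s) ^ m / m) else 0)
      (-Complex.log (1 - (ζ * s) ^ p)) :=
    (hinj.hasSum_iff hzero).1 h4
  have := h1.unique h5
  have hsum : ∑ β ∈ nthRootsFinset p (1 : ℂ), -Complex.log (1 - ζ * β * (s:ℂ))
      = -∑ β ∈ nthRootsFinset p (1 : ℂ), Complex.log (1 - ζ * β * (s:ℂ)) := by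
    rw [Finset.sum_neg_distrib]
  rw [hsum] at this
  have := neg_injective this
  rw [this, mul_pow]


lemma inv_sum_eq {q : ℕ} (hq : 0 < q) {ζ : ℂ} (hζ0 : ζ ≠ 0) (hζ : ‖ζ‖ ≤ 1) {s : ℝ}
    (hs0 : 0 < s) (hs1 : s < 1) :
    ∑ α ∈ nthRootsFinset q (1 : ℂ), ((ζ * α)⁻¹ - (s : ℂ))⁻¹ =
      (q : ℂ) * (s : ℂ) ^ (q - 1) * ((ζ ^ q)⁻¹ - (s : ℂ) ^ q)⁻¹ := by
  -- per-α geometric series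
  have hαsum : ∀ α ∈ nthRootsFinset q (1 : ℂ),
      HasSum (fun n : ℕ => (ζ * α) ^ (n + 1) * (s:ℂ) ^ n) (((ζ * α)⁻¹ - (s:ℂ))⁻¹) := by
    intro α hα
    have hα0 : α ≠ 0 := Polynomial.ne_zero_of_mem_nthRootsFinset one_ne_zero hα
    have hne : ζ * α ≠ 0 := mul_ne_zero hζ0 hα0
    have hlt : ‖ζ * α * (s:ℂ)‖ < 1 := norm_root_mul_lt hq hζ hα hs0 hs1
    have hgeo := (hasSum_geometric_of_norm_lt_one hlt).mul_left (ζ * α)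
    have h1s : (1 : ℂ) - ζ * α * s ≠ 0 := by
      intro h
      rw [sub_eq_zero] at h
      have := congrArg norm h
      rw [norm_one] at this
      exact absurd this.symm (ne_of_lt hlt)
    have hval : ζ * α * (1 - ζ * α * (s:ℂ))⁻¹ = ((ζ * α)⁻¹ - (s:ℂ))⁻¹ := by
      have hfac : (ζ * α)⁻¹ - (s:ℂ) = (ζ * α)⁻¹ * (1 - ζ * α * s) := by
        field_simp
      rw [hfac, mul_inv, inv_inv]
    rw [hval] at hgeo
    refine hgeo.congr_fun fun n => ?_
    ring
  have h1 : HasSum (fun n : ℕ => ∑ α ∈ nthRootsFinset q (1 : ℂ), (ζ * α) ^ (n + 1) * (s:ℂ) ^ n)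
      (∑ α ∈ nthRootsFinset q (1 : ℂ), ((ζ * α)⁻¹ - (s:ℂ))⁻¹) := hasSum_sum hαsum
  have h2 : (fun n : ℕ => ∑ α ∈ nthRootsFinset q (1 : ℂ), (ζ * α) ^ (n + 1) * (s:ℂ) ^ n)
      = fun n : ℕ => if q ∣ (n + 1) then (q : ℂ) * (ζ ^ (n+1) * (s:ℂ) ^ n) else 0 := by
    funext n
    have heach : ∀ α ∈ nthRootsFinset q (1 : ℂ),
        (ζ * α) ^ (n + 1) * (s:ℂ) ^ n = ζ ^ (n+1) * (s:ℂ) ^ n * α ^ (n+1) :=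
      fun α _ => by ring
    rw [Finset.sum_congr rfl heach, ← Finset.mul_sum, sum_nthRoots_pow hq (n+1)]
    split_ifs with h
    · ring
    · rw [mul_zero]
  rw [h2] at h1
  -- geometric series for the RHS
  have h3 : HasSum (fun m : ℕ => ((ζ * (s:ℂ)) ^ q) ^ m)
      ((1 - (ζ * (s:ℂ)) ^ q)⁻¹) :=
    hasSum_geometric_of_norm_lt_one (norm_pow_lt hζ hs0 hs1 hq)
  have h3' := h3.mul_left ((q : ℂ) * ζ ^ q * (s:ℂ) ^ (q - 1))
  have hinj : Function.Injective (fun m : ℕ => q * m + (q - 1)) := by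
    intro a b h
    simp only [add_left_inj] at h
    exact (Nat.mul_right_inj hq.ne').1 h
  have hzero : ∀ n ∉ Set.range (fun m : ℕ => q * m + (q - 1)),
      (if q ∣ (n + 1) then (q : ℂ) * (ζ ^ (n+1) * (s:ℂ) ^ n) else 0) = 0 := by
    intro n hn
    rw [if_neg]
    rintro ⟨(_ | c), hc⟩
    · rw [Nat.mul_zero] at hc; omega
    · rw [Nat.mul_succ] at hc
      exact hn ⟨c, by show q * c + (q - 1) = n; omega⟩
  have h4 : HasSum ((fun n : ℕ => if q ∣ (n + 1) then (q : ℂ) * (ζ ^ (n+1) * (s:ℂ) ^ n) else 0)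
        ∘ (fun m : ℕ => q * m + (q - 1)))
      ((q : ℂ) * ζ ^ q * (s:ℂ) ^ (q - 1) * (1 - (ζ * (s:ℂ)) ^ q)⁻¹) := by
    refine h3'.congr_fun fun m => ?_
    show (if q ∣ (q * m + (q - 1) + 1) then
        (q : ℂ) * (ζ ^ (q * m + (q - 1) + 1) * (s:ℂ) ^ (q * m + (q - 1))) else 0)
      = (q : ℂ) * ζ ^ q * (s:ℂ) ^ (q - 1) * ((ζ * (s:ℂ)) ^ q) ^ m
    have hexp : q * m + (q - 1) + 1 = q * m + q := by omega
    rw [hexp, if_pos ⟨m + 1, by ring⟩]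
    rw [pow_add, pow_add, pow_mul, pow_mul, mul_pow]
    ring
  have h5 := (hinj.hasSum_iff hzero).1 h4
  have := h1.unique h5
  rw [this]
  -- algebraic cleanup
  have hsq : (1 : ℂ) - (ζ * (s:ℂ)) ^ q ≠ 0 := by
    intro h
    rw [sub_eq_zero] at h
    have := congrArg norm h
    rw [norm_one] at this
    exact absurd this.symm (ne_of_lt (by simpa using norm_pow_lt hζ hs0 hs1 hq))
  have hζq : (ζ : ℂ) ^ q ≠ 0 := pow_ne_zero _ hζ0
  rw [mul_pow]
  field_simp


lemma norm_log_le {a : ℂ} (ha : ‖a‖ ≤ 1) {s : ℝ} (hs0 : 0 ≤ s) (hs1 : s < 1) :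
    ‖Complex.log (1 - a * s)‖ ≤ Real.pi + Real.log 2 - Real.log (1 - s) := by
  set z : ℂ := 1 - a * s with hz
  have habs_le : ‖z‖ ≤ 2 := by
    calc ‖z‖ ≤ ‖(1 : ℂ)‖ + ‖a * s‖ := by
          simpa [hz, sub_eq_add_neg] using norm_add_le (1 : ℂ) (-(a * s))
      _ ≤ 1 + 1 := by
          simp only [norm_one, norm_mul, Complex.norm_real, Real.norm_eq_abs]
          have : ‖a‖ * |s| ≤ 1 * 1 := by
            apply mul_le_mul ha (by rw [_root_.abs_of_nonneg hs0]; exact hs1.le) (abs_nonneg s) zero_le_one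
          linarith
      _ = 2 := by norm_num
  have habs_ge : 1 - s ≤ ‖z‖ := by
    have h1 : ‖a * s‖ ≤ s := by
      simp only [norm_mul, Complex.norm_real, Real.norm_eq_abs, _root_.abs_of_nonneg hs0]
      nlinarith [norm_nonneg a]
    calc 1 - s ≤ 1 - ‖a * s‖ := by linarith
      _ = ‖(1 : ℂ)‖ - ‖a * s‖ := by rw [norm_one]
      _ ≤ ‖1 - a * s‖ := by
          exact sub_le_iff_le_add.2 (by simpa using norm_add_le (1 - a * s) (a * s))
  have hs' : (0:ℝ) < 1 - s := by linarith
  have hzpos : (0:ℝ) < ‖z‖ := lt_of_lt_of_le hs' habs_ge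
  have hnorm : ‖Complex.log z‖ ≤ |Real.log (‖z‖)| + Real.pi := by
    calc ‖Complex.log z‖ = ‖Complex.log z‖ := rfl
      _ ≤ |(Complex.log z).re| + |(Complex.log z).im| := Complex.norm_le_abs_re_add_abs_im _
      _ = |Real.log (‖z‖)| + |Complex.arg z| := by rw [Complex.log_re, Complex.log_im]
      _ ≤ |Real.log (‖z‖)| + Real.pi := by linarith [Complex.abs_arg_le_pi z]
  have hlog : |Real.log (‖z‖)| ≤ Real.log 2 - Real.log (1 - s) := by
    have hl2 : (0:ℝ) ≤ Real.log 2 := Real.log_nonneg (by norm_num)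
    have hl1s : Real.log (1 - s) ≤ 0 := Real.log_nonpos hs'.le (by linarith)
    rcases le_or_gt 1 (‖z‖) with h | h
    · rw [_root_.abs_of_nonneg (Real.log_nonneg h)]
      have := Real.log_le_log hzpos habs_le
      linarith
    · rw [_root_.abs_of_nonpos (Real.log_nonpos hzpos.le h.le)]
      have := Real.log_le_log hs' habs_ge
      linarith
  linarith


lemma neg_log_le_rpow {x : ℝ} (hx0 : 0 < x) :
    -Real.log x ≤ 4 * x ^ (-(4⁻¹) : ℝ) := by
  have h1 : Real.log (x ^ (-(4⁻¹) : ℝ)) = -(4⁻¹) * Real.log x := Real.log_rpow hx0 _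
  have h2 : Real.log (x ^ (-(4⁻¹) : ℝ)) ≤ x ^ (-(4⁻¹) : ℝ) - 1 :=
    Real.log_le_sub_one_of_pos (Real.rpow_pos_of_pos hx0 _)
  nlinarith [Real.rpow_pos_of_pos hx0 (-(4⁻¹) : ℝ)]


lemma integrable_majorant (K : ℝ) :
    IntegrableOn (fun s : ℝ => K * (1 - s) ^ (-(2⁻¹) : ℝ)) (Set.Ioo 0 1) := by
  have h1 : IntervalIntegrable (fun x : ℝ => x ^ (-(2⁻¹) : ℝ)) volume 0 1 :=
    intervalIntegral.intervalIntegrable_rpow' (by norm_num)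
  have h2 := (h1.comp_sub_left 1)
  simp only [sub_zero, sub_self] at h2
  have h3 := (h2.symm.const_mul K)
  have h4 : IntegrableOn (fun s : ℝ => K * (1 - s) ^ (-(2⁻¹) : ℝ)) (Set.Ioc 0 1) := by
    simpa using h3.1
  exact h4.mono_set Set.Ioo_subset_Ioc_self


lemma continuousOn_logfac {a : ℂ} (ha : ‖a‖ ≤ 1) :
    ContinuousOn (fun s : ℝ => Complex.log (1 - a * s)) (Set.Ioo 0 1) := by
  apply ContinuousOn.clog
  · exact (continuous_const.sub (continuous_const.mul Complex.continuous_ofReal)).continuousOn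
  · intro s hs
    rw [Complex.mem_slitPlane_iff]
    left
    have h1 : ‖a * s‖ < 1 := by
      rw [norm_mul, Complex.norm_real, Real.norm_eq_abs, _root_.abs_of_nonneg hs.1.le]
      nlinarith [norm_nonneg a, hs.1, hs.2]
    have h2 : (a * (s:ℂ)).re ≤ ‖a * s‖ := Complex.re_le_norm _
    have : (1 - a * (s:ℂ)).re = 1 - (a * (s:ℂ)).re := by simp
    rw [this]
    linarith


lemma integrable_term {a b c : ℂ} (ha : ‖a‖ ≤ 1) (hb : ‖b‖ ≤ 1)
    (hc : ∀ t : ℝ, t ∈ Set.Icc (0:ℝ) 1 → c - t ≠ 0) :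
    IntegrableOn (fun s : ℝ =>
      Complex.log (1 - a * s) * Complex.log (1 - b * s) / (c - s)) (Set.Ioo 0 1) := by
  -- lower bound on denominator
  obtain ⟨t0, ht0, hmin⟩ : ∃ t0 ∈ Set.Icc (0:ℝ) 1, ∀ t ∈ Set.Icc (0:ℝ) 1,
      ‖c - t0‖ ≤ ‖c - t‖ := by
    obtain ⟨t0, ht0, hmin⟩ := isCompact_Icc.exists_isMinOn (Set.nonempty_Icc.2 zero_le_one)
      ((continuous_norm.comp (continuous_const.sub Complex.continuous_ofReal)).continuousOn)
    exact ⟨t0, ht0, fun t ht => isMinOn_iff.1 hmin t ht⟩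
  set m : ℝ := ‖c - t0‖ with hm
  have hmpos : 0 < m := by
    rw [hm]
    exact norm_pos_iff.2 (hc t0 ht0)
  set C : ℝ := Real.pi + Real.log 2 + 4 with hC
  have hCpos : 0 < C := by
    have := Real.pi_pos
    have := Real.log_nonneg (by norm_num : (1:ℝ) ≤ 2)
    rw [hC]; linarith
  set K : ℝ := C ^ 2 / m with hK
  apply MeasureTheory.Integrable.mono' (integrable_majorant K)
  · apply ContinuousOn.aestronglyMeasurable _ measurableSet_Ioo
    apply ContinuousOn.div
    · exact (continuousOn_logfac ha).mul (continuousOn_logfac hb)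
    · exact (continuous_const.sub Complex.continuous_ofReal).continuousOn
    · exact fun s hs => hc s (Set.Ioo_subset_Icc_self hs)
  · rw [MeasureTheory.ae_restrict_iff' measurableSet_Ioo]
    apply MeasureTheory.ae_of_all
    intro s hs
    have hs0 : 0 < s := hs.1
    have hs1 : s < 1 := hs.2
    have hs' : (0:ℝ) < 1 - s := by linarith
    -- bound on each log factor
    have hL : ∀ d : ℂ, ‖d‖ ≤ 1 →
        ‖Complex.log (1 - d * s)‖ ≤ C * (1 - s) ^ (-(4⁻¹) : ℝ) := by
      intro d hd
      have h1 := norm_log_le hd hs0.le hs1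
      have h2 := neg_log_le_rpow hs'
      have h3 : (1:ℝ) ≤ (1 - s) ^ (-(4⁻¹) : ℝ) :=
        Real.one_le_rpow_of_pos_of_le_one_of_nonpos hs' (by linarith) (by norm_num)
      calc ‖Complex.log (1 - d * s)‖ ≤ Real.pi + Real.log 2 - Real.log (1 - s) := h1
        _ ≤ (Real.pi + Real.log 2) * (1 - s) ^ (-(4⁻¹) : ℝ) + 4 * (1 - s) ^ (-(4⁻¹) : ℝ) := by
            have hpl : (0:ℝ) ≤ Real.pi + Real.log 2 := by
              have := Real.pi_pos
              have := Real.log_nonneg (by norm_num : (1:ℝ) ≤ 2)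
              linarith
            nlinarith
        _ = C * (1 - s) ^ (-(4⁻¹) : ℝ) := by rw [hC]; ring
    have hden : m ≤ ‖c - s‖ := hmin s (Set.Ioo_subset_Icc_self hs)
    have hrw : ‖Complex.log (1 - a * s) * Complex.log (1 - b * s) / (c - s)‖
        = ‖Complex.log (1 - a * s)‖ * ‖Complex.log (1 - b * s)‖ / ‖c - s‖ := by
      simp [norm_div, norm_mul]
    rw [hrw]
    have hrpow_pos : (0:ℝ) < (1 - s) ^ (-(4⁻¹) : ℝ) := Real.rpow_pos_of_pos hs' _
    have hnum : ‖Complex.log (1 - a * s)‖ * ‖Complex.log (1 - b * s)‖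
        ≤ C ^ 2 * (1 - s) ^ (-(2⁻¹) : ℝ) := by
      have h1 := hL a ha
      have h2 := hL b hb
      have hsq : (1 - s) ^ (-(4⁻¹) : ℝ) * (1 - s) ^ (-(4⁻¹) : ℝ) = (1 - s) ^ (-(2⁻¹) : ℝ) := by
        rw [← Real.rpow_add hs']
        norm_num
      calc ‖Complex.log (1 - a * s)‖ * ‖Complex.log (1 - b * s)‖
          ≤ (C * (1 - s) ^ (-(4⁻¹) : ℝ)) * (C * (1 - s) ^ (-(4⁻¹) : ℝ)) := by
            apply mul_le_mul h1 h2 (norm_nonneg _) (by positivity)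
        _ = C ^ 2 * (1 - s) ^ (-(2⁻¹) : ℝ) := by rw [← hsq]; ring
    have habs_pos : 0 < ‖c - s‖ := lt_of_lt_of_le hmpos hden
    calc ‖Complex.log (1 - a * s)‖ * ‖Complex.log (1 - b * s)‖ / ‖c - s‖
        ≤ C ^ 2 * (1 - s) ^ (-(2⁻¹) : ℝ) / m := by
          apply div_le_div₀ (by positivity) hnum hmpos hden
      _ = K * (1 - s) ^ (-(2⁻¹) : ℝ) := by rw [hK]; ring


lemma den_ne {c : ℂ} (h0 : c ≠ 0) (h1 : ‖c‖ ≤ 1) (hne : c ≠ 1) {t : ℝ}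
    (ht : t ∈ Set.Icc (0:ℝ) 1) : c⁻¹ - (t : ℂ) ≠ 0 := by
  intro h
  rw [sub_eq_zero] at h
  have ht0 : t ≠ 0 := by
    rintro rfl
    simp only [Complex.ofReal_zero] at h
    exact h0 (inv_eq_zero.1 h)
  have htpos : 0 < t := lt_of_le_of_ne ht.1 (Ne.symm ht0)
  have hct : c = (t : ℂ)⁻¹ := by
    rw [← inv_inv c, h]
  have habs : ‖c‖ = t⁻¹ := by
    rw [hct, norm_inv, Complex.norm_real, Real.norm_eq_abs, _root_.abs_of_pos htpos]
  have h2 : t⁻¹ ≤ 1 := habs ▸ h1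
  have h3 : (1:ℝ) ≤ t⁻¹ := one_le_inv_iff₀.2 ⟨htpos, ht.2⟩
  have ht1 : t = 1 := by
    have h4 : t⁻¹ = 1 := le_antisymm h2 h3
    rw [inv_eq_one] at h4
    exact h4
  apply hne
  rw [hct, ht1]
  norm_num


lemma tpow_one {t : ℝ} (ht : 0 < t) : tpow 1 t = (t : ℂ) := by
  rw [tpow, one_mul, ← Complex.ofReal_exp, Real.exp_log ht]


lemma tpow_pq {p q : ℕ} (hq : 0 < q) {s : ℝ} (hs : 0 < s) :
    tpow ((p : ℂ) / (q : ℂ)) (s ^ q) = (s : ℂ) ^ p := by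
  rw [tpow, Real.log_pow]
  have hq0 : (q : ℂ) ≠ 0 := Nat.cast_ne_zero.2 hq.ne'
  have : (p : ℂ) / (q : ℂ) * ((q : ℕ) * Real.log s : ℝ) = (p : ℂ) * (Real.log s : ℝ) := by
    push_cast
    field_simp
  rw [this, Complex.exp_nat_mul, ← Complex.ofReal_exp, Real.exp_log hs]


lemma pow_image_Ioo {q : ℕ} (hq : 0 < q) :
    (fun x : ℝ => x ^ q) '' (Set.Ioo 0 1) = Set.Ioo (0:ℝ) 1 := by
  ext y
  constructor
  · rintro ⟨x, hx, rfl⟩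
    exact ⟨pow_pos hx.1 q, pow_lt_one₀ hx.1.le hx.2 hq.ne'⟩
  · intro hy
    refine ⟨y ^ ((q : ℝ)⁻¹), ⟨Real.rpow_pos_of_pos hy.1 _, Real.rpow_lt_one hy.1.le hy.2 (by positivity)⟩, ?_⟩
    show (y ^ ((q:ℝ)⁻¹)) ^ q = y
    rw [← Real.rpow_natCast (y ^ ((q:ℝ)⁻¹)) q, ← Real.rpow_mul hy.1.le,
      inv_mul_cancel₀ (by positivity : (q:ℝ) ≠ 0), Real.rpow_one]


lemma triple_sum_factor {ι₁ ι₂ ι₃ : Type*} (s₁ : Finset ι₁) (s₂ : Finset ι₂) (s₃ : Finset ι₃)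
    (f : ι₁ → ℂ) (g : ι₂ → ℂ) (h : ι₃ → ℂ) :
    (∑ b ∈ s₂, g b) * (∑ c ∈ s₃, h c) * (∑ a ∈ s₁, f a)
      = ∑ a ∈ s₁, ∑ b ∈ s₂, ∑ c ∈ s₃, g b * h c * f a := by
  rw [Finset.mul_sum]
  refine Finset.sum_congr rfl fun a _ => ?_
  rw [mul_assoc, Finset.sum_mul]
  refine Finset.sum_congr rfl fun b _ => ?_
  rw [Finset.sum_mul, Finset.mul_sum]
  exact Finset.sum_congr rfl fun c _ => by ring

theorem statement11 (p q : ℕ) (hp : 1 ≤ p) (hq : 1 ≤ q) (u v w ζu ζv ζw : ℂ)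
    (hu : u ≠ 0 ∧ ‖u‖ ≤ 1)
    (hw : w ≠ 0 ∧ ‖w‖ ≤ 1)
    (hv : v ≠ 0 ∧ ‖v‖ ≤ 1 ∧ v ≠ 1)
    (hζu : ζu ^ p = u) (hζw : ζw ^ p = w) (hζv : ζv ^ q = v)
    (hαζ : ∀ α ∈ nthRootsFinset q (1 : ℂ),
      α * ζv ≠ 0 ∧ ‖α * ζv‖ ≤ 1 ∧ α * ζv ≠ 1) :
    F3 ((p : ℂ) / (q : ℂ)) u v w =
      ∑ α ∈ nthRootsFinset q (1 : ℂ), ∑ β ∈ nthRootsFinset p (1 : ℂ), ∑ γ ∈ nthRootsFinset p (1 : ℂ),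
        F3 1 (ζu * β) (ζv * α) (ζw * γ) := by
  obtain ⟨hu0, hu1⟩ := hu
  obtain ⟨hw0, hw1⟩ := hw
  obtain ⟨hv0, hv1, hv2⟩ := hv
  have hp' : 0 < p := hp
  have hq' : 0 < q := hq
  have hζu0 : ζu ≠ 0 := fun h => hu0 (by rw [← hζu, h, zero_pow hp'.ne'])
  have hζw0 : ζw ≠ 0 := fun h => hw0 (by rw [← hζw, h, zero_pow hp'.ne'])
  have hζv0 : ζv ≠ 0 := fun h => hv0 (by rw [← hζv, h, zero_pow hq'.ne'])
  have hζu1 : ‖ζu‖ ≤ 1 := by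
    rw [← pow_le_one_iff_of_nonneg (norm_nonneg ζu) hp'.ne', ← norm_pow, hζu]; exact hu1
  have hζw1 : ‖ζw‖ ≤ 1 := by
    rw [← pow_le_one_iff_of_nonneg (norm_nonneg ζw) hp'.ne', ← norm_pow, hζw]; exact hw1
  have hζv1 : ‖ζv‖ ≤ 1 := by
    rw [← pow_le_one_iff_of_nonneg (norm_nonneg ζv) hq'.ne', ← norm_pow, hζv]; exact hv1
  -- integrability of each term
  have hterm : ∀ α ∈ nthRootsFinset q (1 : ℂ), ∀ β ∈ nthRootsFinset p (1 : ℂ), ∀ γ ∈ nthRootsFinset p (1 : ℂ),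
      IntegrableOn (fun s : ℝ => Complex.log (1 - ζu * β * s) * Complex.log (1 - ζw * γ * s)
        / ((ζv * α)⁻¹ - s)) (Set.Ioo 0 1) := by
    intro α hα β hβ γ hγ
    have h1 : ‖ζu * β‖ ≤ 1 := by
      rw [norm_mul, abs_nthRoot hp' hβ, mul_one]; exact hζu1
    have h2 : ‖ζw * γ‖ ≤ 1 := by
      rw [norm_mul, abs_nthRoot hp' hγ, mul_one]; exact hζw1
    obtain ⟨hc0, hc1, hc2⟩ := hαζ α hα
    rw [mul_comm α ζv] at hc0 hc1 hc2
    have := integrable_term h1 h2 (fun t ht => den_ne hc0 hc1 hc2 ht)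
    simpa [mul_assoc] using this
  -- LHS transformations
  rw [F3, intervalIntegral.integral_of_le zero_le_one, MeasureTheory.integral_Ioc_eq_integral_Ioo]
  have hinj : Set.InjOn (fun x : ℝ => x ^ q) (Set.Ioo 0 1) := by
    apply Set.InjOn.mono _ ((pow_left_strictMonoOn₀ hq'.ne').injOn)
    exact fun x hx => le_of_lt hx.1
  rw [← pow_image_Ioo hq',
    MeasureTheory.integral_image_eq_integral_abs_deriv_smul measurableSet_Ioo
      (fun x _ => (hasDerivAt_pow q x).hasDerivWithinAt) hinj]
  -- pointwise identity
  rw [MeasureTheory.setIntegral_congr_fun measurableSet_Ioo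
    (show Set.EqOn _ (fun s : ℝ => ∑ α ∈ nthRootsFinset q (1 : ℂ), ∑ β ∈ nthRootsFinset p (1 : ℂ),
        ∑ γ ∈ nthRootsFinset p (1 : ℂ), Complex.log (1 - ζu * β * s) * Complex.log (1 - ζw * γ * s)
        / ((ζv * α)⁻¹ - s)) (Set.Ioo 0 1) from ?_)]
  · -- exchange sums and integral, then identify each term
    rw [MeasureTheory.integral_finset_sum _ (fun α hα =>
      MeasureTheory.integrable_finset_sum _ (fun β hβ =>
        MeasureTheory.integrable_finset_sum _ (fun γ hγ => hterm α hα β hβ γ hγ)))]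
    refine Finset.sum_congr rfl fun α hα => ?_
    rw [MeasureTheory.integral_finset_sum _ (fun β hβ =>
      MeasureTheory.integrable_finset_sum _ (fun γ hγ => hterm α hα β hβ γ hγ))]
    refine Finset.sum_congr rfl fun β hβ => ?_
    rw [MeasureTheory.integral_finset_sum _ (fun γ hγ => hterm α hα β hβ γ hγ)]
    refine Finset.sum_congr rfl fun γ hγ => ?_
    rw [F3, intervalIntegral.integral_of_le zero_le_one,
      MeasureTheory.integral_Ioc_eq_integral_Ioo]
    apply MeasureTheory.setIntegral_congr_fun measurableSet_Ioo
    intro s hs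
    dsimp only
    rw [tpow_one hs.1]
  · -- the pointwise identity on (0,1)
    intro s hs
    have hs0 : 0 < s := hs.1
    have hs1 : s < 1 := hs.2
    simp only [tpow_pq hq' hs0]
    have hLu := log_sum_eq hp' hζu1 hs0 hs1
    have hLw := log_sum_eq hp' hζw1 hs0 hs1
    have hD := inv_sum_eq hq' hζv0 hζv1 hs0 hs1
    have hfac := triple_sum_factor (nthRootsFinset q (1 : ℂ)) (nthRootsFinset p (1 : ℂ)) (nthRootsFinset p (1 : ℂ))
      (fun α => ((ζv * α)⁻¹ - (s : ℂ))⁻¹)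
      (fun β => Complex.log (1 - ζu * β * (s : ℂ)))
      (fun γ => Complex.log (1 - ζw * γ * (s : ℂ)))
    simp only [div_eq_mul_inv]
    rw [← hfac, hLu, hLw, hD, ← hζu, ← hζw, ← hζv]
    have habs : |(q : ℝ) * s ^ (q - 1)| = (q : ℝ) * s ^ (q - 1) := by
      apply abs_of_pos
      positivity
    rw [habs, Complex.real_smul]
    push_cast
    ring
end

section
/- Let k, n ≥ 1 be natural numbers, let z be a complex number with Re(z) > 0, and let u, v be complex numbers with u ∈ 𝔻 and v^n ∈ 𝔻'. Then F_k(z/n; u, v^n) = ∑_{β^n=1} F_k(z; u, βv), where the sum runs over all n-th roots of unity β. -/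
open Complex MeasureTheory Polynomial

/-- `F_k(z;u,v) = ∫₀¹ log^k(1 − u t^z)/(v⁻¹ − t) dt`. -/
noncomputable def Fk (k : ℕ) (z u v : ℂ) : ℂ :=
  ∫ t in (0:ℝ)..1, (Complex.log (1 - u * tpow z t)) ^ k / (v⁻¹ - (t : ℂ))


open Finset Set

lemma prodRoots (n : ℕ) (hn : 1 ≤ n) (c : ℂ) :
    ∏ β ∈ nthRootsFinset n (1 : ℂ), (c - β) = c ^ n - 1 := by
  have hprim := Complex.isPrimitiveRoot_exp n (by omega)
  have := Polynomial.X_pow_sub_one_eq_prod (R := ℂ) (by omega) hprim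
  have h2 := congrArg (Polynomial.eval c) this
  simpa [Polynomial.eval_prod] using h2.symm

lemma sumProdErase (n : ℕ) (hn : 1 ≤ n) (c : ℂ) :
    ∑ β ∈ nthRootsFinset n (1 : ℂ), ∏ γ ∈ (nthRootsFinset n (1 : ℂ)).erase β, (c - γ)
      = (n : ℂ) * c ^ (n - 1) := by
  classical
  have h1 : HasDerivAt (fun x : ℂ => ∏ β ∈ nthRootsFinset n (1 : ℂ), (x - β))
      (∑ β ∈ nthRootsFinset n (1 : ℂ), (∏ γ ∈ (nthRootsFinset n (1 : ℂ)).erase β, (c - γ)) • (1:ℂ)) c :=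
    HasDerivAt.fun_finsetProd (fun i _ => (hasDerivAt_id c).sub_const i)
  have h2 : HasDerivAt (fun x : ℂ => ∏ β ∈ nthRootsFinset n (1 : ℂ), (x - β))
      ((n : ℂ) * c ^ (n - 1)) c := by
    have : (fun x : ℂ => ∏ β ∈ nthRootsFinset n (1 : ℂ), (x - β)) = fun x => x ^ n - 1 := by
      funext x; exact prodRoots n hn x
    rw [this]
    simpa using (hasDerivAt_pow n c).sub_const 1
  have := h1.unique h2
  simpa using this

lemma sumInv (n : ℕ) (hn : 1 ≤ n) (c : ℂ) (hc : c ^ n ≠ 1) :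
    ∑ β ∈ nthRootsFinset n (1 : ℂ), (c - β)⁻¹ = (n : ℂ) * c ^ (n - 1) / (c ^ n - 1) := by
  classical
  have hne : c ^ n - 1 ≠ 0 := sub_ne_zero.mpr hc
  have hterm : ∀ β ∈ nthRootsFinset n (1 : ℂ),
      (c - β)⁻¹ = (∏ γ ∈ (nthRootsFinset n (1 : ℂ)).erase β, (c - γ)) / (c ^ n - 1) := by
    intro β hβ
    have hcb : c - β ≠ 0 := by
      intro h
      apply hc
      rw [sub_eq_zero] at h
      rw [h]
      exact (Polynomial.mem_nthRootsFinset (by omega) (1:ℂ)).mp hβ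
    have hmul : (c - β) * ∏ γ ∈ (nthRootsFinset n (1 : ℂ)).erase β, (c - γ) = c ^ n - 1 := by
      rw [Finset.mul_prod_erase _ _ hβ, prodRoots n hn c]
    field_simp
    linear_combination -hmul
  rw [Finset.sum_congr rfl hterm, ← Finset.sum_div, sumProdErase n hn c]

lemma partialFractions (n : ℕ) (hn : 1 ≤ n) (σ v : ℂ) (hσ : σ ≠ 0) (hv : v ≠ 0)
    (h1 : v ^ n * σ ^ n ≠ 1) :
    (n : ℂ) * σ ^ (n - 1) / ((v ^ n)⁻¹ - σ ^ n)
      = ∑ β ∈ nthRootsFinset n (1 : ℂ), ((β * v)⁻¹ - σ)⁻¹ := by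
  classical
  set c : ℂ := (v * σ)⁻¹ with hcdef
  have hcn : c ^ n ≠ 1 := by
    intro h
    apply h1
    rw [hcdef, inv_pow, inv_eq_one, mul_pow] at h
    exact h
  have hterm : ∀ β ∈ nthRootsFinset n (1 : ℂ),
      ((β * v)⁻¹ - σ)⁻¹ = σ⁻¹ * (c * (c - β)⁻¹ - 1) := by
    intro β hβ
    have hβn : β ^ n = 1 := (Polynomial.mem_nthRootsFinset (by omega) (1:ℂ)).mp hβ
    have hβ0 : β ≠ 0 := by rintro rfl; simp [zero_pow (by omega : n ≠ 0)] at hβn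
    have hcb : c - β ≠ 0 := by
      intro h
      apply hcn
      rw [sub_eq_zero] at h
      rw [h, hβn]
    have key : (β * v)⁻¹ - σ = σ * β⁻¹ * (c - β) := by
      rw [hcdef]; field_simp
    rw [key, mul_inv, mul_inv, inv_inv]
    have : β * (c - β)⁻¹ = c * (c - β)⁻¹ - 1 := by
      field_simp
      ring
    rw [mul_assoc, ← this]
  rw [Finset.sum_congr rfl hterm, ← Finset.mul_sum]
  have hcard : ((nthRootsFinset n (1 : ℂ)).card : ℂ) = (n : ℂ) := by
    rw [(Complex.isPrimitiveRoot_exp n (by omega)).card_nthRootsFinset]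
  rw [Finset.sum_sub_distrib, ← Finset.mul_sum, sumInv n hn c hcn, Finset.sum_const,
    nsmul_eq_mul, mul_one, hcard]
  obtain ⟨m, rfl⟩ : ∃ m, n = m + 1 := ⟨n - 1, by omega⟩
  have hc0 : c ≠ 0 := by rw [hcdef]; simp [hv, hσ]
  have hD2 : c ^ (m + 1) - 1 ≠ 0 := sub_ne_zero.mpr hcn
  have hR : c * ((↑(m + 1) : ℂ) * c ^ (m + 1 - 1) / (c ^ (m + 1) - 1)) - (↑(m + 1) : ℂ)
      = (↑(m + 1) : ℂ) / (c ^ (m + 1) - 1) := by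
    simp only [Nat.add_sub_cancel]; field_simp
    ring
  rw [hR]
  have hkey : σ ^ (m + 1) * (c ^ (m + 1) - 1) = (v ^ (m + 1))⁻¹ - σ ^ (m + 1) := by
    rw [hcdef, inv_pow, mul_pow, mul_inv, mul_sub, mul_one, mul_left_comm,
      mul_inv_cancel₀ (pow_ne_zero _ hσ), mul_one]
  rw [← hkey]
  rw [eq_comm]
  simp only [Nat.add_sub_cancel]; field_simp
  ring

lemma tpow_abs (z : ℂ) {s : ℝ} (hs : 0 < s) : ‖tpow z s‖ = s ^ z.re := by
  rw [tpow, Complex.norm_exp, Real.rpow_def_of_pos hs, mul_comm]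
  congr 1
  simp [Complex.mul_re]

lemma logBound (k : ℕ) (z u : ℂ) (hz : 0 < z.re) (hu1 : ‖u‖ ≤ 1) :
    ∃ C : ℝ, 0 ≤ C ∧ ∀ s ∈ Set.Ioo (0:ℝ) 1,
      ‖Complex.log (1 - u * tpow z s)‖ ^ k ≤ C * (1 - s) ^ (-(1/2) : ℝ) := by
  set a := z.re with ha
  set m : ℝ := min a 1 with hmdef
  have hm : 0 < m := lt_min hz one_pos
  set e : ℝ := (2 * (k:ℝ) + 2)⁻¹ with hedef
  have he : 0 < e := by positivity
  set B : ℝ := Real.log 2 + Real.pi with hBdef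
  have hB : 0 ≤ B := by
    have := Real.pi_pos
    have := Real.log_nonneg (by norm_num : (1:ℝ) ≤ 2)
    positivity
  refine ⟨(B + (2 * k + 2)) ^ k * m ^ (-(1/2) : ℝ), by positivity, ?_⟩
  rintro s ⟨hs0, hs1⟩
  have hT : ‖tpow z s‖ = s ^ a := tpow_abs z hs0
  have hsa0 : (0:ℝ) < s ^ a := Real.rpow_pos_of_pos hs0 a
  have hTlt : s ^ a < 1 := Real.rpow_lt_one hs0.le hs1 hz
  have habsuT : ‖u * tpow z s‖ ≤ s ^ a := by
    rw [norm_mul, hT]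
    calc ‖u‖ * s ^ a ≤ 1 * s ^ a := by
          exact mul_le_mul_of_nonneg_right hu1 hsa0.le
      _ = s ^ a := one_mul _
  set x : ℝ := 1 - s ^ a with hxdef
  have hx0 : 0 < x := by simp only [hxdef]; linarith
  have hx1 : x ≤ 1 := by simp only [hxdef]; linarith
  set w : ℂ := 1 - u * tpow z s with hwdef
  have hwlow : x ≤ ‖w‖ := by
    have h1 : ‖(1:ℂ)‖ - ‖u * tpow z s‖ ≤ ‖(1:ℂ) - u * tpow z s‖ := norm_sub_norm_le _ _
    simp only [norm_one] at h1
    simp only [hxdef, hwdef]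
    linarith [habsuT]
  have hwup : ‖w‖ ≤ 2 := by
    have h1 : ‖(1:ℂ) - u * tpow z s‖ ≤ ‖(1:ℂ)‖ + ‖u * tpow z s‖ := norm_sub_le _ _
    simp only [norm_one] at h1
    simp only [hwdef]
    linarith [habsuT, hsa0, hTlt]
  have hw0 : 0 < ‖w‖ := lt_of_lt_of_le hx0 hwlow
  have hlogabs : |Real.log (‖w‖)| ≤ Real.log 2 - Real.log x := by
    have hlogx : Real.log x ≤ 0 := Real.log_nonpos hx0.le hx1
    rcases le_or_gt 1 (‖w‖) with h | h
    · rw [_root_.abs_of_nonneg (Real.log_nonneg h)]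
      have h2 : Real.log (‖w‖) ≤ Real.log 2 := Real.log_le_log hw0 hwup
      linarith
    · rw [_root_.abs_of_nonpos (Real.log_nonpos hw0.le h.le)]
      have h2 : Real.log x ≤ Real.log (‖w‖) := Real.log_le_log hx0 hwlow
      have h3 : (0:ℝ) ≤ Real.log 2 := Real.log_nonneg (by norm_num)
      linarith
  have hclog : ‖Complex.log w‖ ≤ B - Real.log x := by
    have hdef : Complex.log w = (Real.log (‖w‖) : ℂ) + (Complex.arg w : ℂ) * Complex.I := by
      rw [Complex.log]
    calc ‖Complex.log w‖
        ≤ ‖(Real.log (‖w‖) : ℂ)‖ + ‖(Complex.arg w : ℂ) * Complex.I‖ := by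
          rw [hdef]; exact norm_add_le _ _
      _ = |Real.log (‖w‖)| + |Complex.arg w| := by
          simp [Complex.norm_real]
      _ ≤ (Real.log 2 - Real.log x) + Real.pi := add_le_add hlogabs (Complex.abs_arg_le_pi w)
      _ = B - Real.log x := by rw [hBdef]; ring
  have hxe : 0 < x ^ (-e) := Real.rpow_pos_of_pos hx0 _
  have hnl : -Real.log x ≤ (2 * k + 2) * x ^ (-e) := by
    have h5 : Real.log (x ^ (-e)) = -e * Real.log x := Real.log_rpow hx0 _
    have h6 : Real.log (x ^ (-e)) ≤ x ^ (-e) - 1 := Real.log_le_sub_one_of_pos hxe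
    have h7 : -e * Real.log x ≤ x ^ (-e) := by linarith
    have h8 : -Real.log x ≤ x ^ (-e) / e := by
      rw [le_div_iff₀ he]
      calc -Real.log x * e = -e * Real.log x := by ring
        _ ≤ x ^ (-e) := h7
    calc -Real.log x ≤ x ^ (-e) / e := h8
      _ = (2 * k + 2) * x ^ (-e) := by
          rw [div_eq_mul_inv, hedef, inv_inv, mul_comm]
  have hxe1 : 1 ≤ x ^ (-e) :=
    Real.one_le_rpow_of_pos_of_le_one_of_nonpos hx0 hx1 (by linarith)
  have hstep : ‖Complex.log w‖ ≤ (B + (2 * k + 2)) * x ^ (-e) := by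
    have hB2 : B ≤ B * x ^ (-e) := le_mul_of_one_le_right hB hxe1
    calc ‖Complex.log w‖ ≤ B - Real.log x := hclog
      _ ≤ B * x ^ (-e) + (2 * k + 2) * x ^ (-e) := by linarith
      _ = (B + (2 * k + 2)) * x ^ (-e) := by ring
  have hpow : ‖Complex.log w‖ ^ k ≤ (B + (2 * k + 2)) ^ k * x ^ (-e * k) := by
    calc ‖Complex.log w‖ ^ k ≤ ((B + (2 * k + 2)) * x ^ (-e)) ^ k :=
          pow_le_pow_left₀ (norm_nonneg _) hstep k
      _ = (B + (2 * k + 2)) ^ k * (x ^ (-e)) ^ k := mul_pow _ _ _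
      _ = (B + (2 * k + 2)) ^ k * x ^ (-e * k) := by
          rw [← Real.rpow_natCast (x ^ (-e)) k, ← Real.rpow_mul hx0.le]
  have hek : e * k ≤ 1 / 2 := by
    have h2k : (0:ℝ) < 2 * k + 2 := by positivity
    rw [hedef, inv_mul_eq_div, div_le_iff₀ h2k]
    push_cast
    linarith [Nat.cast_nonneg (α := ℝ) k]
  have hexp : x ^ (-e * (k:ℝ)) ≤ x ^ (-(1/2) : ℝ) :=
    Real.rpow_le_rpow_of_exponent_ge hx0 hx1 (by linarith)
  have hms : m * (1 - s) ≤ x := by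
    rcases le_total a 1 with h | h
    · have hmeq : m = a := min_eq_left h
      have hgm := Real.geom_mean_le_arith_mean2_weighted hz.le (by linarith : (0:ℝ) ≤ 1 - a)
        hs0.le zero_le_one (by ring)
      rw [Real.one_rpow, mul_one] at hgm
      simp only [hxdef, hmeq]
      nlinarith
    · have hmeq : m = 1 := min_eq_right h
      have h2 : s ^ a ≤ s ^ (1:ℝ) := Real.rpow_le_rpow_of_exponent_ge hs0 hs1.le h
      rw [Real.rpow_one] at h2
      simp only [hxdef, hmeq]
      linarith
  have h7 : x ^ (-(1/2):ℝ) ≤ (m * (1 - s)) ^ (-(1/2):ℝ) :=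
    Real.rpow_le_rpow_of_nonpos (by nlinarith) hms (by norm_num)
  have h8 : (m * (1 - s)) ^ (-(1/2):ℝ) = m ^ (-(1/2):ℝ) * (1 - s) ^ (-(1/2):ℝ) :=
    Real.mul_rpow hm.le (by linarith)
  calc ‖Complex.log w‖ ^ k ≤ (B + (2 * k + 2)) ^ k * x ^ (-e * k) := hpow
    _ ≤ (B + (2 * k + 2)) ^ k * x ^ (-(1/2):ℝ) := by
        refine mul_le_mul_of_nonneg_left ?_ (by positivity)
        exact_mod_cast hexp
    _ ≤ (B + (2 * k + 2)) ^ k * (m ^ (-(1/2):ℝ) * (1 - s) ^ (-(1/2):ℝ)) := by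
        refine mul_le_mul_of_nonneg_left ?_ (by positivity)
        rw [← h8]; exact h7
    _ = (B + (2 * k + 2)) ^ k * m ^ (-(1/2):ℝ) * (1 - s) ^ (-(1/2):ℝ) := by ring

lemma contA (k : ℕ) (z u : ℂ) (hz : 0 < z.re) (hu1 : ‖u‖ ≤ 1) :
    ContinuousOn (fun s : ℝ => (Complex.log (1 - u * tpow z s)) ^ k) (Set.Ioo 0 1) := by
  have h1 : ContinuousOn (fun s : ℝ => ((Real.log s : ℝ) : ℂ)) (Set.Ioo (0:ℝ) 1) :=
    Complex.continuous_ofReal.comp_continuousOn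
      (Real.continuousOn_log.mono (fun x hx => ne_of_gt hx.1))
  have hT : ContinuousOn (fun s : ℝ => tpow z s) (Set.Ioo 0 1) := by
    simp only [tpow]
    exact Complex.continuous_exp.comp_continuousOn (continuousOn_const.mul h1)
  have hw : ContinuousOn (fun s : ℝ => 1 - u * tpow z s) (Set.Ioo 0 1) :=
    continuousOn_const.sub (continuousOn_const.mul hT)
  refine (hw.clog ?_).pow k
  rintro s ⟨hs0, hs1⟩
  have habs : ‖u * tpow z s‖ < 1 := by
    rw [norm_mul, tpow_abs z hs0]
    calc ‖u‖ * s ^ z.re ≤ 1 * s ^ z.re :=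
          mul_le_mul_of_nonneg_right hu1 (Real.rpow_pos_of_pos hs0 _).le
      _ = s ^ z.re := one_mul _
      _ < 1 := Real.rpow_lt_one hs0.le hs1 hz
  left
  have := Complex.re_le_norm (u * tpow z s)
  simp only [Complex.sub_re, Complex.one_re]
  linarith

lemma integrable_g (k : ℕ) (z u : ℂ) (hz : 0 < z.re) (hu1 : ‖u‖ ≤ 1)
    (w : ℂ) (hw1 : 1 ≤ ‖w‖) (hwne : w ≠ 1) :
    MeasureTheory.IntegrableOn
      (fun s : ℝ => (Complex.log (1 - u * tpow z s)) ^ k / (w - (s:ℂ)))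
      (Set.Ioo 0 1) := by
  have hd : ∀ s ∈ Set.Icc (0:ℝ) 1, w - (s:ℂ) ≠ 0 := by
    rintro s ⟨h0, h1⟩ h
    rw [sub_eq_zero] at h
    have habs : ‖w‖ = s := by rw [h, Complex.norm_real, Real.norm_eq_abs, _root_.abs_of_nonneg h0]
    have : s = 1 := le_antisymm h1 (by rw [← habs]; exact hw1)
    apply hwne
    rw [h, this, Complex.ofReal_one]
  have hcont_inv : ContinuousOn (fun s : ℝ => (w - (s:ℂ))⁻¹) (Set.Icc 0 1) :=
    ((continuous_const.sub Complex.continuous_ofReal).continuousOn).inv₀ hd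
  obtain ⟨M, hM⟩ := isCompact_Icc.exists_bound_of_continuousOn hcont_inv
  have hM0 : 0 ≤ M := le_trans (norm_nonneg _) (hM 0 ⟨le_refl _, zero_le_one⟩)
  obtain ⟨C, hC0, hCb⟩ := logBound k z u hz hu1
  have hgc : ContinuousOn
      (fun s : ℝ => (Complex.log (1 - u * tpow z s)) ^ k / (w - (s:ℂ))) (Set.Ioo 0 1) :=
    (contA k z u hz hu1).div
      ((continuous_const.sub Complex.continuous_ofReal).continuousOn)
      (fun s hs => hd s (Set.Ioo_subset_Icc_self hs))
  have hmeas : MeasureTheory.AEStronglyMeasurable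
      (fun s : ℝ => (Complex.log (1 - u * tpow z s)) ^ k / (w - (s:ℂ)))
      (MeasureTheory.volume.restrict (Set.Ioo 0 1)) :=
    hgc.aestronglyMeasurable measurableSet_Ioo
  have hint : MeasureTheory.IntegrableOn (fun s : ℝ => (1 - s) ^ (-(1/2) : ℝ)) (Set.Ioo 0 1) := by
    have h := (intervalIntegral.intervalIntegrable_rpow'
      (by norm_num : (-1:ℝ) < -(1/2)) (a := 0) (b := 1)).comp_sub_left 1
    simp only [sub_self, sub_zero] at h
    exact h.2.mono_set Set.Ioo_subset_Ioc_self
  refine MeasureTheory.Integrable.mono' ((hint.const_mul (C * M))) hmeas ?_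
  rw [MeasureTheory.ae_restrict_iff' measurableSet_Ioo]
  filter_upwards with s hs
  have hs' := hs
  obtain ⟨hs0, hs1⟩ := hs'
  have hnn : (0:ℝ) ≤ (1 - s) ^ (-(1/2) : ℝ) := Real.rpow_nonneg (by linarith) _
  calc ‖(Complex.log (1 - u * tpow z s)) ^ k / (w - (s:ℂ))‖
      = ‖Complex.log (1 - u * tpow z s)‖ ^ k * ‖(w - (s:ℂ))⁻¹‖ := by
        rw [div_eq_mul_inv, norm_mul, norm_pow]
    _ ≤ (C * (1 - s) ^ (-(1/2) : ℝ)) * M := by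
        refine mul_le_mul (hCb s hs) (hM s (Set.Ioo_subset_Icc_self hs)) (norm_nonneg _) ?_
        positivity
    _ = C * M * (1 - s) ^ (-(1/2) : ℝ) := by ring

theorem statement15 (k n : ℕ) (hk : 1 ≤ k) (hn : 1 ≤ n) (z u v : ℂ) (hz : 0 < z.re)
    (hu0 : u ≠ 0) (hu1 : ‖u‖ ≤ 1)
    (hvn0 : v ^ n ≠ 0) (hvn1 : ‖v ^ n‖ ≤ 1) (hvn2 : v ^ n ≠ 1) :
    Fk k (z / (n : ℂ)) u (v ^ n) = ∑ β ∈ nthRootsFinset n (1 : ℂ), Fk k z u (β * v) := by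
  have hn0 : n ≠ 0 := by omega
  have hnC : (n:ℂ) ≠ 0 := Nat.cast_ne_zero.mpr hn0
  have hv : v ≠ 0 := fun h => hvn0 (by rw [h, zero_pow hn0])
  have hvabs : ‖v‖ ≤ 1 := by
    have h : ‖v‖ ^ n ≤ 1 := by rw [← norm_pow]; exact hvn1
    exact (pow_le_one_iff_of_nonneg (norm_nonneg v) hn0).mp h
  have himg : (fun s : ℝ => s ^ n) '' Set.Ioo 0 1 = Set.Ioo 0 1 := by
    ext t
    constructor
    · rintro ⟨x, ⟨hx0, hx1⟩, rfl⟩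
      exact ⟨pow_pos hx0 n, pow_lt_one₀ hx0.le hx1 hn0⟩
    · rintro ⟨ht0, ht1⟩
      exact ⟨t ^ ((n:ℝ)⁻¹),
        ⟨Real.rpow_pos_of_pos ht0 _, Real.rpow_lt_one ht0.le ht1 (by positivity)⟩,
        Real.rpow_inv_natCast_pow ht0.le hn0⟩
  have hinj : Set.InjOn (fun s : ℝ => s ^ n) (Set.Ioo 0 1) :=
    (pow_left_strictMonoOn₀ hn0).injOn.mono (fun x hx => le_of_lt hx.1)
  have hderiv : ∀ s ∈ Set.Ioo (0:ℝ) 1, HasDerivWithinAt (fun s : ℝ => s ^ n)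
      ((n:ℝ) * s ^ (n-1)) (Set.Ioo 0 1) s := fun s _ => (hasDerivAt_pow n s).hasDerivWithinAt
  have hsub := MeasureTheory.integral_image_eq_integral_abs_deriv_smul measurableSet_Ioo hderiv hinj
      (fun t : ℝ => (Complex.log (1 - u * tpow (z/(n:ℂ)) t)) ^ k / ((v^n)⁻¹ - (t:ℂ)))
  rw [himg] at hsub
  have hpt : ∀ s ∈ Set.Ioo (0:ℝ) 1,
      |(n:ℝ) * s ^ (n-1)| •
          ((Complex.log (1 - u * tpow (z/(n:ℂ)) (s^n))) ^ k / ((v^n)⁻¹ - ((s^n : ℝ):ℂ)))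
        = ∑ β ∈ nthRootsFinset n (1 : ℂ),
            (Complex.log (1 - u * tpow z s)) ^ k / ((β*v)⁻¹ - (s:ℂ)) := by
    rintro s ⟨hs0, hs1⟩
    have hlog : tpow (z/(n:ℂ)) (s^n) = tpow z s := by
      simp only [tpow]
      rw [Real.log_pow]
      congr 1
      push_cast
      field_simp
    have hσ0 : ((s:ℂ)) ≠ 0 := by exact_mod_cast hs0.ne'
    have h1 : v ^ n * (s:ℂ) ^ n ≠ 1 := by
      intro h
      have habs := congrArg (‖·‖) h
      rw [norm_mul, norm_one, norm_pow, norm_pow, Complex.norm_real, Real.norm_eq_abs,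
        _root_.abs_of_nonneg hs0.le] at habs
      have hlt : ‖v‖ ^ n * s ^ n < 1 := by
        calc ‖v‖ ^ n * s ^ n ≤ 1 * s ^ n := by
              refine mul_le_mul_of_nonneg_right ?_ (by positivity)
              exact pow_le_one₀ (norm_nonneg v) hvabs
          _ = s ^ n := one_mul _
          _ < 1 := pow_lt_one₀ hs0.le hs1 hn0
      rw [habs] at hlt
      exact lt_irrefl 1 hlt
    have hpf := partialFractions n hn (s:ℂ) v hσ0 hv h1
    rw [hlog, _root_.abs_of_nonneg (by positivity : (0:ℝ) ≤ (n:ℝ) * s ^ (n-1)),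
      Complex.real_smul]
    push_cast
    rw [show (∑ β ∈ nthRootsFinset n (1 : ℂ),
          (Complex.log (1 - u * tpow z s)) ^ k / ((β*v)⁻¹ - (s:ℂ)))
        = (Complex.log (1 - u * tpow z s)) ^ k
            * ∑ β ∈ nthRootsFinset n (1 : ℂ), ((β*v)⁻¹ - (s:ℂ))⁻¹ from by
        rw [Finset.mul_sum]; simp [div_eq_mul_inv]]
    rw [← hpf]
    ring
  have hintg : ∀ β ∈ nthRootsFinset n (1 : ℂ), MeasureTheory.IntegrableOn
      (fun s : ℝ => (Complex.log (1 - u * tpow z s)) ^ k / ((β*v)⁻¹ - (s:ℂ)))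
      (Set.Ioo 0 1) := by
    intro β hβ
    have hβn : β ^ n = 1 := (Polynomial.mem_nthRootsFinset (by omega) (1:ℂ)).mp hβ
    have hβabs : ‖β‖ = 1 := by
      have h := congrArg (‖·‖) hβn
      rw [norm_pow, norm_one] at h
      exact le_antisymm ((pow_le_one_iff_of_nonneg (norm_nonneg β) hn0).mp h.le)
        ((one_le_pow_iff_of_nonneg (norm_nonneg β) hn0).mp h.ge)
    have hv0 : 0 < ‖v‖ := by
      simpa [norm_pos_iff] using hv
    have habsinv : 1 ≤ ‖(β*v)⁻¹‖ := by
      rw [norm_inv, norm_mul, hβabs, one_mul]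
      exact one_le_inv_iff₀.mpr ⟨hv0, hvabs⟩
    have hne1 : (β*v)⁻¹ ≠ 1 := by
      intro h
      rw [inv_eq_one] at h
      apply hvn2
      have h2 := congrArg (· ^ n) h
      simp only [mul_pow, hβn, one_mul, one_pow] at h2
      exact h2
    exact integrable_g k z u hz hu1 _ habsinv hne1
  rw [Fk, intervalIntegral.integral_of_le zero_le_one,
    MeasureTheory.integral_Ioc_eq_integral_Ioo, hsub,
    MeasureTheory.setIntegral_congr_fun measurableSet_Ioo hpt,
    MeasureTheory.integral_finset_sum _ hintg]
  refine Finset.sum_congr rfl fun β hβ => ?_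
  rw [Fk, intervalIntegral.integral_of_le zero_le_one,
    MeasureTheory.integral_Ioc_eq_integral_Ioo]
end
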